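/- arXiv:1510.01890 — 6 statements merged into one kernel-verified Lean document; each statement's English description precedes it below -/
import Mathlib

section
/- Let n be a positive integer with n odd double factorial defined by n!! = n(n-2)···3·1 and (-1)!! = 1. For all integers p ≥ 1 and m > p, the sum over all multi-indices (k_1,...,k_m) of nonnegative integers with k_1+···+k_m = p of the multinomial coefficient p!/(k_1!···k_m!) times (∏_{i=1}^m (2k_i - 1)!! - 1) is at most 4^p · p! · m^{p-1}. -/
open Finset

/-- The odd double factorial: `oddDoubleFactorial k = (2k-1)!! = (2k-1)(2k-3)⋯3⋅1`,
with the convention `(-1)!! = 1` (the case `k = 0`). -/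
def oddDoubleFactorial (k : ℕ) : ℕ := ∏ i ∈ Finset.range k, (2 * i + 1)

lemma oddDF_le (k : ℕ) : oddDoubleFactorial k ≤ 2 ^ k * k.factorial := by
  calc oddDoubleFactorial k ≤ ∏ i ∈ Finset.range k, (2 * (i + 1)) :=
        Finset.prod_le_prod (fun _ _ => Nat.zero_le _) (fun i _ => by omega)
    _ = 2 ^ k * k.factorial := by
        rw [Finset.prod_mul_distrib, Finset.prod_const, Finset.card_range,
          Finset.prod_range_add_one_eq_factorial]

lemma oddDF_one {k : ℕ} (h : k ≤ 1) : oddDoubleFactorial k = 1 := by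
  interval_cases k <;> simp [oddDoubleFactorial]

lemma card_msum {m : ℕ} (c : Fin m → ℕ) :
    Multiset.card (∑ i, c i • ({i} : Multiset (Fin m))) = ∑ i, c i := by
  induction (univ : Finset (Fin m)) using Finset.cons_induction with
  | empty => simp
  | cons a s ha ih => simp [Finset.sum_cons, ih]

lemma count_msum {m : ℕ} (c : Fin m → ℕ) (j : Fin m) :
    Multiset.count j (∑ i, c i • ({i} : Multiset (Fin m))) = c j := by
  simp [Multiset.count_sum', Multiset.count_singleton]

lemma term_bound {m p : ℕ} (k : Fin m → ℕ) (hs : ∑ i, k i = p) :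
    Nat.multinomial Finset.univ k * ((∏ i, oddDoubleFactorial (k i)) - 1)
      ≤ 2 ^ p * Nat.factorial p := by
  calc Nat.multinomial Finset.univ k * ((∏ i, oddDoubleFactorial (k i)) - 1)
      ≤ Nat.multinomial Finset.univ k * ∏ i, oddDoubleFactorial (k i) :=
        Nat.mul_le_mul_left _ (Nat.sub_le _ _)
    _ ≤ Nat.multinomial Finset.univ k * ∏ i, (2 ^ (k i) * (k i).factorial) :=
        Nat.mul_le_mul_left _ (Finset.prod_le_prod (fun _ _ => Nat.zero_le _)
          (fun i _ => oddDF_le (k i)))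
    _ = 2 ^ p * ((∏ i, (k i).factorial) * Nat.multinomial Finset.univ k) := by
        rw [Finset.prod_mul_distrib, Finset.prod_pow_eq_pow_sum, hs]; ring
    _ = 2 ^ p * Nat.factorial p := by rw [Nat.multinomial_spec, hs]

lemma card_filter_le (p m : ℕ) (hm : 0 < m) :
    ((Finset.Nat.antidiagonalTuple m p).filter (fun k => ∃ i, 2 ≤ k i)).card
      ≤ m * Nat.multichoose m (p - 2) := by
  classical
  have hcard : (Finset.univ : Finset (Fin m × Sym (Fin m) (p - 2))).card
      = m * Nat.multichoose m (p - 2) := by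
    rw [Finset.card_univ, Fintype.card_prod, Fintype.card_fin,
      Sym.card_sym_eq_multichoose, Fintype.card_fin]
  rw [← hcard]
  set f : (Fin m → ℕ) → Fin m × Sym (Fin m) (p - 2) := fun k =>
    if h : (∃ i, 2 ≤ k i) ∧ ∑ i, k i = p then
      (h.1.choose, ⟨∑ i, (Function.update k h.1.choose (k h.1.choose - 2) i) • ({i} : Multiset (Fin m)), by
        rw [card_msum, Finset.sum_update_of_mem (Finset.mem_univ _)]
        have h2 := h.1.choose_spec
        have h3 : ∑ x ∈ univ \ {h.1.choose}, k x + ∑ x ∈ {h.1.choose}, k x = ∑ x, k x :=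
          Finset.sum_sdiff (Finset.singleton_subset_iff.mpr (Finset.mem_univ _))
        rw [Finset.sum_singleton] at h3
        have h4 := h.2
        omega⟩)
    else (⟨0, hm⟩, Sym.replicate (p - 2) ⟨0, hm⟩) with hf
  apply Finset.card_le_card_of_injOn f (fun _ _ => Finset.mem_univ _)
  intro a ha b hb hab
  simp only [Finset.mem_coe, Finset.mem_filter, Finset.Nat.mem_antidiagonalTuple] at ha hb
  have hca : (∃ i, 2 ≤ a i) ∧ ∑ i, a i = p := ⟨ha.2, ha.1⟩
  have hcb : (∃ i, 2 ≤ b i) ∧ ∑ i, b i = p := ⟨hb.2, hb.1⟩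
  rw [hf] at hab
  simp only [dif_pos hca, dif_pos hcb, Prod.mk.injEq, Subtype.mk.injEq] at hab
  obtain ⟨h1, h2⟩ := Prod.mk.inj hab
  have hmul : ∀ j, Function.update a hca.1.choose (a hca.1.choose - 2) j
      = Function.update b hcb.1.choose (b hcb.1.choose - 2) j := by
    intro j
    have hv := congrArg Subtype.val h2
    rw [← count_msum (Function.update a hca.1.choose (a hca.1.choose - 2)) j,
      ← count_msum (Function.update b hcb.1.choose (b hcb.1.choose - 2)) j]
    exact congrArg (Multiset.count j) hv
  funext j
  have := hmul j
  have ha2 := hca.1.choose_spec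
  have hb2 := hcb.1.choose_spec
  by_cases hj : j = hca.1.choose
  · subst hj
    rw [Function.update_self, ← h1, Function.update_self] at this
    rw [← h1] at hb2
    omega
  · rw [Function.update_of_ne hj, Function.update_of_ne (h1 ▸ hj)] at this
    exact this

/-- For all integers `p ≥ 1` and `m > p`, the sum over all multi-indices
`(k_1, …, k_m)` of nonnegative integers with `k_1 + ⋯ + k_m = p` of the multinomial
coefficient `p! / (k_1! ⋯ k_m!)` times `(∏_{i=1}^m (2 k_i - 1)!! - 1)` is at most
`4^p ⋅ p! ⋅ m^(p-1)`. -/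
theorem multinomial_double_factorial_bound (p m : ℕ) (hp : 1 ≤ p) (hm : p < m) :
    ∑ k ∈ Finset.Nat.antidiagonalTuple m p,
      Nat.multinomial Finset.univ k * ((∏ i, oddDoubleFactorial (k i)) - 1)
    ≤ 4 ^ p * Nat.factorial p * m ^ (p - 1) := by
  classical
  have hzero : ∀ k ∈ Finset.Nat.antidiagonalTuple m p, ¬ (∃ i, 2 ≤ k i) →
      Nat.multinomial Finset.univ k * ((∏ i, oddDoubleFactorial (k i)) - 1) = 0 := by
    intro k _ hk
    push_neg at hk
    have : (∏ i, oddDoubleFactorial (k i)) = 1 :=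
      Finset.prod_eq_one (fun i _ => oddDF_one (by have := hk i; omega))
    rw [this]; simp
  rw [← Finset.sum_filter_of_ne (fun k hk hne => by
    by_contra h; exact hne (hzero k hk h))]
  set S := (Finset.Nat.antidiagonalTuple m p).filter (fun k => ∃ i, 2 ≤ k i) with hS
  rcases eq_or_lt_of_le hp with hp1 | hp2
  · -- p = 1 : S is empty
    have : S = ∅ := by
      rw [hS, Finset.filter_eq_empty_iff]
      intro k hk
      rw [Finset.Nat.mem_antidiagonalTuple] at hk
      rintro ⟨i, hi⟩
      have : k i ≤ ∑ j, k j := Finset.single_le_sum (fun _ _ => Nat.zero_le _) (Finset.mem_univ i)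
      omega
    rw [this]
    simp
  · -- p ≥ 2
    have hb : ∀ k ∈ S, Nat.multinomial Finset.univ k * ((∏ i, oddDoubleFactorial (k i)) - 1)
        ≤ 2 ^ p * Nat.factorial p := by
      intro k hk
      rw [hS, Finset.mem_filter, Finset.Nat.mem_antidiagonalTuple] at hk
      exact term_bound k hk.1
    calc ∑ k ∈ S, Nat.multinomial Finset.univ k * ((∏ i, oddDoubleFactorial (k i)) - 1)
        ≤ S.card * (2 ^ p * Nat.factorial p) := by
          simpa using Finset.sum_le_card_nsmul S _ _ hb
      _ ≤ (m * Nat.multichoose m (p - 2)) * (2 ^ p * Nat.factorial p) :=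
          Nat.mul_le_mul_right _ (card_filter_le p m (by omega))
      _ ≤ 4 ^ p * Nat.factorial p * m ^ (p - 1) := by
          have h1 : Nat.multichoose m (p - 2) ≤ (2 * m) ^ (p - 2) := by
            rw [Nat.multichoose_eq]
            calc (m + (p - 2) - 1).choose (p - 2) ≤ (m + (p - 2) - 1) ^ (p - 2) :=
                  Nat.choose_le_pow _ _
              _ ≤ (2 * m) ^ (p - 2) := Nat.pow_le_pow_left (by omega) _
          calc (m * Nat.multichoose m (p - 2)) * (2 ^ p * Nat.factorial p)
              ≤ (m * (2 * m) ^ (p - 2)) * (2 ^ p * Nat.factorial p) :=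
                Nat.mul_le_mul_right _ (Nat.mul_le_mul_left _ h1)
            _ = (2 ^ (p - 2) * 2 ^ p) * Nat.factorial p * (m * m ^ (p - 2)) := by
                rw [mul_pow]; ring
            _ ≤ 4 ^ p * Nat.factorial p * m ^ (p - 1) := by
                have e1 : m * m ^ (p - 2) = m ^ (p - 1) := by
                  rw [← pow_succ']
                  congr 1
                  omega
                have e2 : 2 ^ (p - 2) * 2 ^ p ≤ 4 ^ p := by
                  rw [← pow_add, (by norm_num : (4:ℕ) = 2 ^ 2), ← pow_mul]
                  exact Nat.pow_le_pow_right (by norm_num) (by omega)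
                rw [e1]
                exact Nat.mul_le_mul_right _ (Nat.mul_le_mul_right _ e2)
end

section
/- Let X be a semimartingale on [0,T] and τ a stopping time such that X_t = f(t) almost surely for all t < τ, where f : [0,T] → ℝ is a deterministic function. If ℚ(τ ≥ t*) > 0 for some t* ∈ [0,T], then f is of finite variation on [0,t*]. -/
open MeasureTheory

/-- The elementary stochastic integral `∑_i h_i (X_{u_i} - X_{u_{i-1}})` of a simple
predictable integrand given by grid points `u` and `ℱ_{u_{i-1}}`-measurable coefficients
`h_i`. -/
noncomputable def elemIntegral {Ω : Type*} (X : ℝ → Ω → ℝ) {n : ℕ}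
    (u : Fin (n + 1) → ℝ) (h : Fin n → Ω → ℝ) (ω : Ω) : ℝ :=
  ∑ i : Fin n, h i ω * (X (u i.succ) ω - X (u i.castSucc) ω)

lemma sign_mul_self_eq_abs (x : ℝ) : Real.sign x * x = |x| := by
  rcases lt_trichotomy x 0 with h|h|h
  · rw [Real.sign_of_neg h, abs_of_neg h]; ring
  · simp [h]
  · rw [Real.sign_of_pos h, abs_of_pos h]; ring

/-- partial-variation bound via prepending 0 -/
lemma prep_bound {f : ℝ → ℝ} {tstar C : ℝ} (htstar : 0 < tstar)
    (key : ∀ (m : ℕ) (v : Fin (m+1) → ℝ), Monotone v → v 0 = 0 → (∀ i, 0 ≤ v i) →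
      (∀ i, v i < tstar) → ∑ i : Fin m, |f (v i.succ) - f (v i.castSucc)| ≤ C)
    (k : ℕ) (u : ℕ → ℝ) (hu : Monotone u) (hnn : ∀ i, 0 ≤ u i)
    (hlt : ∀ i ≤ k, u i < tstar) :
    ∑ i ∈ Finset.range k, |f (u (i+1)) - f (u i)| ≤ C := by
  set w : ℕ → ℝ := fun j => if j = 0 then 0 else u (j - 1) with hw
  set v : Fin (k+2) → ℝ := fun j => w j.val with hv
  have hwmono : Monotone w := by
    intro a b hab
    rcases Nat.eq_zero_or_pos a with ha | ha
    · subst ha; simp only [hw, if_pos rfl]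
      rcases Nat.eq_zero_or_pos b with hb | hb
      · simp [hb]
      · simp only [Nat.pos_iff_ne_zero.mp hb, if_neg (Nat.pos_iff_ne_zero.mp hb)]
        exact hnn _
    · have hb : b ≠ 0 := Nat.pos_iff_ne_zero.mp (lt_of_lt_of_le ha hab)
      simp only [hw, if_neg (Nat.pos_iff_ne_zero.mp ha), if_neg hb]
      exact hu (by omega)
  have hkey := key (k+1) v (fun a b hab => hwmono hab) (by simp [hv, hw]) (fun i => by
      rcases Nat.eq_zero_or_pos i.val with h0 | h0
      · simp [hv, hw, h0, Fin.val_eq_zero_iff.mp h0]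
      · simp only [hv, hw, if_neg (Nat.pos_iff_ne_zero.mp h0)]; exact hnn _)
    (fun i => by
      rcases Nat.eq_zero_or_pos i.val with h0 | h0
      · simp [hv, hw, h0, htstar, Fin.val_eq_zero_iff.mp h0]
      · simp only [hv, hw, if_neg (Nat.pos_iff_ne_zero.mp h0)]
        exact hlt _ (by omega))
  -- rewrite the Fin sum as range sum
  have hsum : ∑ i : Fin (k+1), |f (v i.succ) - f (v i.castSucc)|
      = ∑ i ∈ Finset.range (k+1), |f (w (i+1)) - f (w i)| := by
    rw [← Fin.sum_univ_eq_sum_range (fun i => |f (w (i+1)) - f (w i)|) (k+1)]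
    apply Finset.sum_congr rfl
    intro i _
    simp [hv, Fin.val_succ, Fin.coe_castSucc]
  rw [hsum, Finset.sum_range_succ'] at hkey
  have h2 : ∑ i ∈ Finset.range k, |f (w (i+1+1)) - f (w (i+1))|
      = ∑ i ∈ Finset.range k, |f (u (i+1)) - f (u i)| := by
    apply Finset.sum_congr rfl
    intro i _
    simp [hw]
  rw [h2] at hkey
  have := abs_nonneg (f (w 1) - f (w 0))
  linarith

lemma bv_of_key {f : ℝ → ℝ} {tstar C : ℝ} (htstar : 0 < tstar) (hC : 0 ≤ C)
    (key : ∀ (m : ℕ) (v : Fin (m+1) → ℝ), Monotone v → v 0 = 0 → (∀ i, 0 ≤ v i) →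
      (∀ i, v i < tstar) → ∑ i : Fin m, |f (v i.succ) - f (v i.castSucc)| ≤ C) :
    BoundedVariationOn f (Set.Icc 0 tstar) := by
  set D : ℝ := 2*C + (|f tstar - f 0| + C) with hD
  have hpt : ∀ x : ℝ, 0 ≤ x → x < tstar → |f x - f 0| ≤ C := by
    intro x hx hxlt
    have := prep_bound htstar key 1 (fun j => if j = 0 then 0 else x)
      (by intro a b hab
          rcases eq_or_ne b 0 with hb|hb
          · have ha : a = 0 := by omega
            simp [ha, hb]
          · rcases eq_or_ne a 0 with ha|ha
            · simpa [ha, hb] using hx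
            · simp [ha, hb])
      (fun i => by by_cases h : i = 0 <;> simp [h, hx])
      (fun i _ => by by_cases h : i = 0 <;> simp [h, htstar, hxlt])
    simpa using this
  have main : ∀ (n : ℕ) (u : ℕ → ℝ), Monotone u → (∀ i, u i ∈ Set.Icc 0 tstar) →
      ∑ i ∈ Finset.range n, |f (u (i+1)) - f (u i)| ≤ D := by
    intro n u hu hmem
    have hnn : ∀ i, 0 ≤ u i := fun i => (hmem i).1
    have hle : ∀ i, u i ≤ tstar := fun i => (hmem i).2
    by_cases hall : ∀ i < n, u (i+1) < tstar
    · rcases Nat.eq_zero_or_pos n with h0 | h0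
      · simp [h0, hD]; positivity
      have hb : ∑ i ∈ Finset.range n, |f (u (i+1)) - f (u i)| ≤ C := by
        apply prep_bound htstar key n u hu hnn
        intro i hi
        rcases Nat.eq_zero_or_pos i with h|h
        · subst h; exact lt_of_le_of_lt (hu (Nat.zero_le 1)) (hall 0 h0)
        · have : i - 1 < n := by omega
          have := hall (i-1) this
          have hi1 : i - 1 + 1 = i := by omega
          rwa [hi1] at this
      have : 0 ≤ |f tstar - f 0| + C := by positivity
      nlinarith
    · push_neg at hall
      obtain ⟨j, hjn, hjt⟩ := hall
      have hex : ∃ j, j < n ∧ tstar ≤ u (j+1) := ⟨j, hjn, hjt⟩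
      obtain ⟨k, ⟨hkn, hkt⟩, hklt⟩ :
          ∃ k, (k < n ∧ tstar ≤ u (k+1)) ∧ ∀ i < k, u (i+1) < tstar := by
        refine ⟨Nat.find hex, Nat.find_spec hex, fun i hi => ?_⟩
        have h := Nat.find_min hex hi
        have hin : i < n := hi.trans (Nat.find_spec hex).1
        by_contra hcon
        exact h ⟨hin, not_lt.mp hcon⟩
      have hukt : u (k+1) = tstar := le_antisymm (hle _) hkt
      -- split the sum
      have hsplit : ∑ i ∈ Finset.range n, |f (u (i+1)) - f (u i)|
          = ∑ i ∈ Finset.range (k+1), |f (u (i+1)) - f (u i)|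
            + ∑ i ∈ Finset.Ico (k+1) n, |f (u (i+1)) - f (u i)| := by
        rw [Finset.range_eq_Ico, ← Finset.sum_Ico_consecutive _ (Nat.zero_le _) (by omega : k+1 ≤ n),
          ← Finset.range_eq_Ico]
      have htail : ∑ i ∈ Finset.Ico (k+1) n, |f (u (i+1)) - f (u i)| = 0 := by
        apply Finset.sum_eq_zero
        intro i hi
        rw [Finset.mem_Ico] at hi
        have h1 : u i = tstar := le_antisymm (hle _) (hukt ▸ hu (by omega : k+1 ≤ i))
        have h2 : u (i+1) = tstar := le_antisymm (hle _) (hukt ▸ hu (by omega : k+1 ≤ i+1))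
        simp [h1, h2]
      have hmid : ∑ i ∈ Finset.range k, |f (u (i+1)) - f (u i)| ≤ C := by
        rcases Nat.eq_zero_or_pos k with hk0|hk0
        · simp [hk0, hC]
        · refine prep_bound htstar key k u hu hnn ?_
          intro i hi
          rcases Nat.eq_zero_or_pos i with h|h
          · subst h
            exact lt_of_le_of_lt (hu (Nat.zero_le 1)) (hklt 0 hk0)
          · have : i - 1 < k := by omega
            have := hklt (i-1) this
            rwa [Nat.sub_add_cancel h] at this
      have hlastterm : |f (u (k+1)) - f (u k)| ≤ |f tstar - f 0| + C := by
        rw [hukt]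
        by_cases hk0 : u k < tstar
        · have h1 : |f (u k) - f 0| ≤ C := hpt _ (hnn k) hk0
          calc |f tstar - f (u k)| = |(f tstar - f 0) - (f (u k) - f 0)| := by ring_nf
            _ ≤ |f tstar - f 0| + |f (u k) - f 0| := abs_sub _ _
            _ ≤ |f tstar - f 0| + C := by linarith
        · have : u k = tstar := le_antisymm (hle _) (not_lt.mp hk0)
          rw [this]
          simp
          positivity
      rw [hsplit, htail, Finset.sum_range_succ]
      simp only [hD]
      linarith
  -- conclude
  rw [BoundedVariationOn]
  have : eVariationOn f (Set.Icc 0 tstar) ≤ ENNReal.ofReal D := by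
    rw [eVariationOn]
    apply iSup_le
    rintro ⟨n, ⟨u, hu, hus⟩⟩
    have heq : ∀ i ∈ Finset.range n, edist (f (u (i+1))) (f (u i)) = ENNReal.ofReal (|f (u (i+1)) - f (u i)|) := by
      intro i _
      rw [edist_dist, Real.dist_eq]
    rw [Finset.sum_congr rfl heq, ← ENNReal.ofReal_sum_of_nonneg (fun i _ => abs_nonneg _)]
    exact ENNReal.ofReal_le_ofReal (main n u hu hus)
  exact ne_top_of_le_ne_top ENNReal.ofReal_ne_top this

lemma abs_sign_le_one' (x : ℝ) : |Real.sign x| ≤ 1 := by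
  rcases lt_trichotomy x 0 with h|h|h
  · rw [Real.sign_of_neg h]; norm_num
  · rw [h, Real.sign_zero]; norm_num
  · rw [Real.sign_of_pos h]; norm_num

theorem key_claim
    {Ω : Type*} {m0 : MeasurableSpace Ω} (Q : Measure Ω) [IsProbabilityMeasure Q]
    (ℱ : Filtration ℝ m0) (T : ℝ) (tstar : ℝ) (htstar : 0 < tstar) (hT : tstar ≤ T)
    (X : ℝ → Ω → ℝ)
    (hsemi : ∀ ε : ℝ, 0 < ε → ∃ C : ℝ, ∀ (n : ℕ) (u : Fin (n + 1) → ℝ)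
      (h : Fin n → Ω → ℝ),
      Monotone u → u 0 = 0 → u (Fin.last n) = tstar →
      (∀ i : Fin n, StronglyMeasurable[ℱ (u i.castSucc)] (h i)) →
      (∀ (i : Fin n) (ω : Ω), |h i ω| ≤ 1) →
      Q {ω | C < |elemIntegral X u h ω|} ≤ ENNReal.ofReal ε)
    (τ : Ω → ℝ)
    (f : ℝ → ℝ)
    (hfrozen : ∀ t : ℝ, 0 ≤ t → t ≤ T → ∀ᵐ ω ∂Q, t < τ ω → X t ω = f t)
    (hpos : 0 < Q {ω | tstar ≤ τ ω}) :
    ∃ C : ℝ, ∀ (m : ℕ) (v : Fin (m+1) → ℝ), Monotone v → v 0 = 0 → (∀ i, 0 ≤ v i) →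
      (∀ i, v i < tstar) → ∑ i : Fin m, |f (v i.succ) - f (v i.castSucc)| ≤ C := by
  set A := {ω | tstar ≤ τ ω} with hA
  have hQA_top : Q A ≠ ⊤ := measure_ne_top Q A
  set ε := (Q A).toReal / 2 with hε
  have hεpos : 0 < ε := by
    have : 0 < (Q A).toReal := ENNReal.toReal_pos (ne_of_gt hpos) hQA_top
    positivity
  obtain ⟨C, hC⟩ := hsemi ε hεpos
  have hεlt : ENNReal.ofReal ε < Q A := by
    conv_rhs => rw [← ENNReal.ofReal_toReal hQA_top]
    rw [ENNReal.ofReal_lt_ofReal_iff (ENNReal.toReal_pos (ne_of_gt hpos) hQA_top)]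
    simp only [hε]
    linarith [ENNReal.toReal_pos (ne_of_gt hpos) hQA_top]
  refine ⟨C, ?_⟩
  intro m v hmono hv0 hvnn hvlt
  by_contra hV
  push_neg at hV
  -- the grid and integrand
  set u : Fin (m+2) → ℝ := fun j => if h : (j:ℕ) < m + 1 then v ⟨j, h⟩ else tstar with hu
  set c : Fin (m+1) → ℝ := fun i => if h : (i:ℕ) < m
    then Real.sign (f (v (⟨(i:ℕ), h⟩ : Fin m).succ) - f (v (⟨(i:ℕ), h⟩ : Fin m).castSucc))
    else 0 with hc
  have huval : ∀ (j : Fin (m+2)) (h : (j:ℕ) < m + 1), u j = v ⟨j, h⟩ := by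
    intro j h; simp only [hu, dif_pos h]
  have hulast' : ∀ (j : Fin (m+2)), ¬ ((j:ℕ) < m + 1) → u j = tstar := by
    intro j h; simp only [hu, dif_neg h]
  have humem : ∀ j : Fin (m+2), 0 ≤ u j ∧ u j ≤ tstar := by
    intro j
    by_cases h : (j:ℕ) < m + 1
    · rw [huval j h]; exact ⟨hvnn _, (hvlt _).le⟩
    · rw [hulast' j h]; exact ⟨htstar.le, le_rfl⟩
  have hum : Monotone u := by
    intro a b hab
    by_cases hb : (b:ℕ) < m + 1
    · have ha : (a:ℕ) < m + 1 := lt_of_le_of_lt hab hb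
      rw [huval a ha, huval b hb]
      exact hmono hab
    · rw [hulast' b hb]; exact (humem a).2
  have hu0 : u 0 = 0 := by
    rw [huval 0 (by simp)]
    simpa using hv0
  have hulast : u (Fin.last (m+1)) = tstar := hulast' _ (by simp)
  have hcbd : ∀ (i : Fin (m+1)) (ω : Ω), |(fun _ : Ω => c i) ω| ≤ 1 := by
    intro i ω
    simp only [hc]
    split
    · exact abs_sign_le_one' _
    · simp
  have hQle := hC (m+1) u (fun i _ => c i) hum hu0 hulast
    (fun i => stronglyMeasurable_const) hcbd
  -- a.e. freezing on grid points
  have hae : ∀ᵐ ω ∂Q, ∀ j : Fin (m+2), u j < τ ω → X (u j) ω = f (u j) := by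
    rw [ae_all_iff]
    intro j
    exact hfrozen (u j) (humem j).1 ((humem j).2.trans hT)
  -- computation of the elementary integral
  have hcomp : ∀ ω : Ω, (∀ j : Fin (m+2), (j:ℕ) < m + 1 → X (u j) ω = f (u j)) →
      elemIntegral X u (fun i _ => c i) ω
        = ∑ i : Fin m, |f (v i.succ) - f (v i.castSucc)| := by
    intro ω hX
    unfold elemIntegral
    rw [Fin.sum_univ_castSucc]
    have hlastc : c (Fin.last m) = 0 := by simp [hc]
    simp only [hlastc, zero_mul, add_zero]
    apply Finset.sum_congr rfl
    intro i _
    have h1 : ((i.castSucc : Fin (m+1)).succ : Fin (m+2)) = ⟨(i:ℕ)+1, by omega⟩ := by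
      ext; simp
    have h2 : ((i.castSucc : Fin (m+1)).castSucc : Fin (m+2)) = ⟨(i:ℕ), by omega⟩ := by
      ext; simp
    have hx1 : X (u (i.castSucc.succ)) ω = f (v i.succ) := by
      rw [h1, hX _ (by simp), huval _ (by simp)]
      rfl
    have hx2 : X (u (i.castSucc.castSucc)) ω = f (v i.castSucc) := by
      rw [h2, hX _ (Nat.lt_succ_of_lt i.isLt), huval _ (Nat.lt_succ_of_lt i.isLt)]
      rfl
    have hcv : c i.castSucc = Real.sign (f (v i.succ) - f (v i.castSucc)) := by
      simp only [hc, Fin.coe_castSucc, dif_pos i.isLt]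
    rw [hx1, hx2, hcv, sign_mul_self_eq_abs]
  -- A is a.e. contained in the bad set
  have hsub : ∀ᵐ ω ∂Q, ω ∈ A → ω ∈ {ω | C < |elemIntegral X u (fun i _ => c i) ω|} := by
    filter_upwards [hae] with ω hfr hAω
    have hX : ∀ j : Fin (m+2), (j:ℕ) < m + 1 → X (u j) ω = f (u j) := by
      intro j hj
      refine hfr j (lt_of_lt_of_le ?_ hAω)
      rw [huval j hj]; exact hvlt _
    have := hcomp ω hX
    simp only [Set.mem_setOf_eq, this]
    exact lt_of_lt_of_le hV (le_abs_self _)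
  have hmono' : Q A ≤ Q {ω | C < |elemIntegral X u (fun i _ => c i) ω|} :=
    measure_mono_ae hsub
  exact absurd (hmono'.trans hQle) (not_le.mpr hεlt)

/-- If `X` is a semimartingale (in the Bichteler–Dellacherie sense: the family of
elementary stochastic integrals of predictable integrands bounded by `1` on `[0, t*]` is
bounded in probability) and `τ` is a stopping time such that a.s. `X_t = f(t)` for all
`t < τ` with `f` deterministic, then `Q(τ ≥ t*) > 0` implies that `f` is of finite
variation on `[0, t*]`. -/
theorem finite_variation_of_semimartingale_frozen
    {Ω : Type*} {m0 : MeasurableSpace Ω} (Q : Measure Ω) [IsProbabilityMeasure Q]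
    (ℱ : Filtration ℝ m0) (T : ℝ) (tstar : ℝ) (htstar : 0 < tstar) (hT : tstar ≤ T)
    (X : ℝ → Ω → ℝ)
    -- `X` is a semimartingale: elementary integrals with `|h| ≤ 1` are bounded in
    -- probability
    (hsemi : ∀ ε : ℝ, 0 < ε → ∃ C : ℝ, ∀ (n : ℕ) (u : Fin (n + 1) → ℝ)
      (h : Fin n → Ω → ℝ),
      Monotone u → u 0 = 0 → u (Fin.last n) = tstar →
      (∀ i : Fin n, StronglyMeasurable[ℱ (u i.castSucc)] (h i)) →
      (∀ (i : Fin n) (ω : Ω), |h i ω| ≤ 1) →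
      Q {ω | C < |elemIntegral X u h ω|} ≤ ENNReal.ofReal ε)
    (τ : Ω → ℝ) (hτ : IsStoppingTime ℱ (fun ω => (τ ω : WithTop ℝ)))
    (f : ℝ → ℝ)
    (hfrozen : ∀ t : ℝ, 0 ≤ t → t ≤ T → ∀ᵐ ω ∂Q, t < τ ω → X t ω = f t)
    (hpos : 0 < Q {ω | tstar ≤ τ ω}) :
    BoundedVariationOn f (Set.Icc 0 tstar) := by
  obtain ⟨C, hkey⟩ := key_claim Q ℱ T tstar htstar hT X hsemi τ f hfrozen hpos
  refine bv_of_key htstar (le_max_right C 0) ?_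
  intro m v h1 h2 h3 h4
  exact (hkey m v h1 h2 h3 h4).trans (le_max_left C 0)
end

section
/- Let M be a continuous local martingale on [0,T], let t* > 0, and let B be an atom of F_{t*} (or of F_{t*-}). Then almost surely M_t = M_0 on B for all t < t*. -/
open MeasureTheory Filter Topology


/-- On an atom `B`, any `m'`-measurable real function is a.s. constant. -/
lemma exists_ae_const_on_aux {Ω : Type*} {m0 : MeasurableSpace Ω} (μ : Measure Ω)
    [IsFiniteMeasure μ] (B : Set Ω) (hBm : MeasurableSet[m0] B) (hB0 : μ B ≠ 0)
    {m' : MeasurableSpace Ω} (hm' : m' ≤ m0)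
    (htriv : ∀ A : Set Ω, MeasurableSet[m'] A → μ (A ∩ B) = 0 ∨ μ (A ∩ B) = μ B)
    (X : Ω → ℝ) (hX : Measurable[m'] X) :
    ∃ c : ℝ, ∀ᵐ ω ∂μ, ω ∈ B → X ω = c := by
  set T : ℝ → Set Ω := fun r => {ω | X ω ≤ r} ∩ B with hT
  have hTmeas : ∀ r, MeasurableSet[m0] (T r) := fun r =>
    ((hm' _ (hX measurableSet_Iic)).inter hBm)
  have htriv' : ∀ r, μ (T r) = 0 ∨ μ (T r) = μ B := fun r =>
    htriv _ (hX measurableSet_Iic)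
  have hTmono : ∀ ⦃r r' : ℝ⦄, r ≤ r' → T r ⊆ T r' := by
    intro r r' hrr ω hω
    exact ⟨le_trans hω.1 hrr, hω.2⟩
  have hTle : ∀ r, μ (T r) ≤ μ B := fun r => measure_mono Set.inter_subset_right
  set S : Set ℝ := {r | μ (T r) = μ B} with hS
  have hSup : ∀ r ∈ S, ∀ r', r ≤ r' → r' ∈ S := by
    intro r hr r' hrr
    exact le_antisymm (hTle r') (hr ▸ measure_mono (hTmono hrr))
  -- S is nonempty
  have h1 : ∃ n : ℕ, (n : ℝ) ∈ S := by
    by_contra hcon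
    push_neg at hcon
    have hz : ∀ n : ℕ, μ (T n) = 0 := fun n => (htriv' n).resolve_right (hcon n)
    have hBsub : B ⊆ ⋃ n : ℕ, T n := by
      intro ω hω
      obtain ⟨n, hn⟩ := exists_nat_ge (X ω)
      exact Set.mem_iUnion.2 ⟨n, ⟨hn, hω⟩⟩
    exact hB0 (measure_mono_null hBsub (measure_iUnion_null hz))
  -- bounded below
  have h2 : ∃ n : ℕ, μ (T (-(n : ℝ))) = 0 := by
    by_contra hcon
    push_neg at hcon
    have hall : ∀ n : ℕ, μ (T (-(n : ℝ))) = μ B := fun n =>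
      (htriv' _).resolve_left (hcon n)
    have hempty : ⋂ n : ℕ, T (-(n : ℝ)) = ∅ := by
      ext ω
      simp only [Set.mem_iInter, Set.mem_empty_iff_false, iff_false, not_forall]
      obtain ⟨n, hn⟩ := exists_nat_gt (-X ω)
      refine ⟨n, fun hmem => ?_⟩
      have h' : X ω ≤ -(n:ℝ) := hmem.1
      linarith
    have htend : Tendsto (fun n : ℕ => μ (T (-(n : ℝ)))) atTop
        (𝓝 (μ (⋂ n : ℕ, T (-(n : ℝ))))) := by
      refine tendsto_measure_iInter_atTop (fun n => (hTmeas _).nullMeasurableSet) ?_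
        ⟨0, measure_ne_top _ _⟩
      intro a b hab
      exact hTmono (by exact_mod_cast neg_le_neg (Nat.cast_le.2 hab))
    rw [hempty] at htend
    simp only [hall, measure_empty] at htend
    exact hB0 (tendsto_nhds_unique tendsto_const_nhds htend)
  obtain ⟨n1, hn1⟩ := h1
  obtain ⟨n2, hn2⟩ := h2
  have hSbdd : BddBelow S := by
    refine ⟨-(n2 : ℝ), fun r hr => ?_⟩
    by_contra hcon
    push_neg at hcon
    have hle2 : μ (T r) ≤ μ (T (-(n2 : ℝ))) := measure_mono (hTmono hcon.le)
    rw [hn2] at hle2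
    rw [hS, Set.mem_setOf_eq] at hr
    exact hB0 (le_antisymm (hr ▸ hle2) zero_le)
  have hSne : S.Nonempty := ⟨n1, hn1⟩
  set c : ℝ := sInf S with hc
  -- μ (T c) = μ B
  have hc_in : μ (T c) = μ B := by
    have hInter : T c = ⋂ n : ℕ, T (c + 1 / (n + 1)) := by
      ext ω
      constructor
      · intro hω
        refine Set.mem_iInter.2 fun n => hTmono ?_ hω
        have : (0:ℝ) < 1 / ((n:ℝ) + 1) := by positivity
        linarith
      · intro hω
        have hωB : ω ∈ B := (Set.mem_iInter.1 hω 0).2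
        refine ⟨?_, hωB⟩
        have hle : ∀ n : ℕ, X ω ≤ c + 1 / ((n:ℝ) + 1) := fun n => (Set.mem_iInter.1 hω n).1
        have htend : Tendsto (fun n : ℕ => c + 1 / ((n : ℝ) + 1)) atTop (𝓝 c) := by
          simpa using (tendsto_const_nhds (x := c)).add (tendsto_one_div_add_atTop_nhds_zero_nat (𝕜 := ℝ))
        exact ge_of_tendsto htend (Eventually.of_forall hle)
    have hmem : ∀ n : ℕ, (c + 1 / ((n:ℝ) + 1)) ∈ S := by
      intro n
      have hlt : c < c + 1 / ((n:ℝ)+1) := by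
        have : (0:ℝ) < 1 / ((n:ℝ) + 1) := by positivity
        linarith
      obtain ⟨r, hrS, hrlt⟩ := exists_lt_of_csInf_lt hSne hlt
      exact hSup r hrS _ hrlt.le
    have htend : Tendsto (fun n : ℕ => μ (T (c + 1 / ((n:ℝ) + 1)))) atTop
        (𝓝 (μ (⋂ n : ℕ, T (c + 1 / ((n:ℝ) + 1))))) := by
      refine tendsto_measure_iInter_atTop (fun n => (hTmeas _).nullMeasurableSet) ?_
        ⟨0, measure_ne_top _ _⟩
      intro a b hab
      refine hTmono ?_
      have hab' : ((a:ℝ) + 1) ≤ ((b:ℝ) + 1) := by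
        have : (a:ℝ) ≤ b := Nat.cast_le.2 hab
        linarith
      have : (1:ℝ) / ((b:ℝ) + 1) ≤ 1 / ((a:ℝ) + 1) :=
        one_div_le_one_div_of_le (by positivity) hab'
      linarith
    rw [← hInter] at htend
    have htend' : Tendsto (fun _ : ℕ => μ B) atTop (𝓝 (μ (T c))) :=
      htend.congr fun n => hmem n
    exact (tendsto_nhds_unique tendsto_const_nhds htend').symm
  -- μ ({X < c} ∩ B) = 0
  have hc_out : μ ({ω | X ω < c} ∩ B) = 0 := by
    have hUnion : {ω | X ω < c} ∩ B = ⋃ n : ℕ, T (c - 1 / (n + 1)) := by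
      ext ω
      constructor
      · intro hω
        have hωlt : X ω < c := hω.1
        have hpos : (0:ℝ) < c - X ω := sub_pos.2 hωlt
        obtain ⟨n, hn⟩ := exists_nat_one_div_lt hpos
        refine Set.mem_iUnion.2 ⟨n, ⟨?_, hω.2⟩⟩
        have : (1:ℝ) / ((n:ℝ) + 1) < c - X ω := by exact_mod_cast hn
        simp only [Set.mem_setOf_eq]
        linarith
      · intro hω
        obtain ⟨n, hn⟩ := Set.mem_iUnion.1 hω
        have hpos : (0:ℝ) < 1 / ((n:ℝ) + 1) := by positivity
        have h' : X ω ≤ c - 1 / ((n:ℝ) + 1) := hn.1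
        exact ⟨by simp only [Set.mem_setOf_eq]; linarith, hn.2⟩
    rw [hUnion]
    refine measure_iUnion_null fun n => ?_
    rcases htriv' (c - 1 / ((n:ℝ) + 1)) with h | h
    · exact h
    · exfalso
      have : c ≤ c - 1 / ((n:ℝ) + 1) := csInf_le hSbdd h
      have hpos : (0:ℝ) < 1 / ((n:ℝ) + 1) := by positivity
      linarith
  refine ⟨c, ?_⟩
  rw [ae_iff]
  have hdiff : μ (B \ T c) = 0 := by
    have := measure_diff (show T c ⊆ B from Set.inter_subset_right)
      (hTmeas c).nullMeasurableSet (measure_ne_top μ _)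
    rw [this, hc_in, tsub_self]
  refine measure_mono_null (fun ω hω => ?_) (measure_union_null hc_out hdiff)
  simp only [Set.mem_setOf_eq, not_forall] at hω
  rcases lt_trichotomy (X ω) c with h | h | h
  · exact Or.inl ⟨h, hω.1⟩
  · exact absurd h hω.2
  · exact Or.inr ⟨hω.1, fun hc' => absurd hc'.1 (not_le.2 h)⟩

/-- Two continuous functions that agree on rationals in `[0, s]` agree on `[0, s]`. -/
lemma eq_on_Icc_of_rat_aux {g h : ℝ → ℝ} (hg : Continuous g) (hh : Continuous h) {s : ℝ}
    (hq : ∀ q : ℚ, 0 ≤ (q : ℝ) → (q : ℝ) ≤ s → g q = h q) :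
    ∀ r : ℝ, 0 ≤ r → r ≤ s → g r = h r := by
  intro r hr0 hrs
  rcases eq_or_lt_of_le hr0 with h0 | h0
  · subst h0
    simpa using hq 0 (by norm_num) (by norm_num; linarith)
  · have hlt : ∀ n : ℕ, max (r - 1 / (n + 1)) 0 < r := by
      intro n
      refine max_lt ?_ h0
      have : (0:ℝ) < 1 / ((n:ℝ) + 1) := by positivity
      linarith
    choose q hq1 hq2 using fun n : ℕ => exists_rat_btwn (hlt n)
    have htend : Tendsto (fun n : ℕ => (q n : ℝ)) atTop (𝓝 r) := by
      refine tendsto_of_tendsto_of_tendsto_of_le_of_le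
        (g := fun n : ℕ => r - 1 / ((n:ℝ) + 1)) (h := fun _ : ℕ => r) ?_ tendsto_const_nhds
        ?_ ?_
      · simpa using (tendsto_const_nhds (x := r)).sub (tendsto_one_div_add_atTop_nhds_zero_nat (𝕜 := ℝ))
      · intro n
        exact ((le_max_left _ _).trans_lt (hq1 n)).le
      · intro n
        exact (hq2 n).le
    have hgq : Tendsto (fun n : ℕ => g (q n)) atTop (𝓝 (g r)) := (hg.tendsto r).comp htend
    have hhq : Tendsto (fun n : ℕ => h (q n)) atTop (𝓝 (h r)) := (hh.tendsto r).comp htend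
    have heq : (fun n : ℕ => g (q n)) = fun n : ℕ => h (q n) := by
      funext n
      exact hq (q n) ((le_max_right _ _).trans (hq1 n).le) ((hq2 n).le.trans hrs)
    rw [heq] at hgq
    exact tendsto_nhds_unique hgq hhq


/-- `M` is a local martingale on the filtration `ℱ`: there is a nondecreasing sequence of
stopping times tending to infinity such that each stopped process is a martingale. -/
def IsLocalMartingale {Ω : Type*} {m0 : MeasurableSpace Ω} (μ : Measure Ω)
    (ℱ : Filtration ℝ m0) (M : ℝ → Ω → ℝ) : Prop :=
  ∃ τ : ℕ → Ω → ℝ,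
    (∀ n, IsStoppingTime ℱ (fun ω => (τ n ω : WithTop ℝ))) ∧
    (∀ ω, Monotone fun n => τ n ω) ∧
    (∀ ω, Tendsto (fun n => τ n ω) atTop atTop) ∧
    (∀ n, Martingale (MeasureTheory.stoppedProcess M (fun ω => (τ n ω : WithTop ℝ))) ℱ μ)

/-- `B` is an atom of the σ-algebra `m'` under `μ`. -/
def IsMeasAtom {Ω : Type*} {m0 : MeasurableSpace Ω} (μ : Measure Ω) (m' : MeasurableSpace Ω) (B : Set Ω) : Prop :=
  MeasurableSet[m'] B ∧ ∀ B' : Set Ω, MeasurableSet[m'] B' → B' ⊆ B → μ B' = 0 ∨ μ B' = μ B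

lemma ae_on_ne_zero_aux {Ω : Type*} {m0 : MeasurableSpace Ω} {μ : Measure Ω} {B : Set Ω}
    {Q : Ω → Prop} (hae : ∀ᵐ ω ∂μ, ω ∈ B → Q ω) (hB0 : μ B ≠ 0) :
    μ (B ∩ {ω | Q ω}) ≠ 0 := by
  intro h
  refine hB0 (measure_mono_null ?_ (measure_union_null h (ae_iff.1 hae)))
  intro ω hω
  by_cases hQ : Q ω
  · exact Or.inl ⟨hω, hQ⟩
  · exact Or.inr (by simp only [Set.mem_setOf_eq, not_forall]; exact ⟨hω, hQ⟩)

/-- A continuous local martingale is a.s. constant on `B × [0, t*)` whenever `B` is an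
atom of `F_{t*}` (or of `F_{t*-} = ⨆_{s < t*} F_s`). -/
theorem continuous_local_martingale_constant_on_atom
    {Ω : Type*} {m0 : MeasurableSpace Ω} (μ : Measure Ω) [IsProbabilityMeasure μ]
    (ℱ : Filtration ℝ m0)
    (M : ℝ → Ω → ℝ) (hM : IsLocalMartingale μ ℱ M)
    (hMcont : ∀ ω, Continuous fun t => M t ω)
    (tstar : ℝ) (htstar : 0 < tstar)
    (B : Set Ω)
    (hB : IsMeasAtom μ (ℱ tstar) B ∨ IsMeasAtom μ (⨆ s ∈ Set.Iio tstar, ℱ s) B) :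
    ∀ᵐ ω ∂μ, ω ∈ B → ∀ t : ℝ, 0 ≤ t → t < tstar → M t ω = M 0 ω := by
  classical
  obtain ⟨τ, hτst, hτmono, hτtend, hτmart⟩ := hM
  have hτst' : ∀ n (s : ℝ), MeasurableSet[ℱ s] {ω | τ n ω ≤ s} := fun n s => by
    simpa using hτst n s
  by_cases hB0 : μ B = 0
  · refine (ae_iff).2 (measure_mono_null (fun ω hω => ?_) hB0)
    simp only [Set.mem_setOf_eq, not_forall] at hω
    exact hω.1
  -- B is measurable and its trace on each ℱ s, s < tstar, is trivial
  have hBmeas : MeasurableSet[m0] B := by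
    rcases hB with h | h
    · exact ℱ.le tstar _ h.1
    · exact (iSup₂_le fun s _ => ℱ.le s : (⨆ s ∈ Set.Iio tstar, ℱ s) ≤ m0) _ h.1
  have htriv : ∀ s : ℝ, s < tstar → ∀ A : Set Ω, MeasurableSet[ℱ s] A →
      μ (A ∩ B) = 0 ∨ μ (A ∩ B) = μ B := by
    intro s hs A hA
    rcases hB with h | h
    · exact h.2 _ ((((ℱ.mono hs.le) _ hA).inter h.1)) Set.inter_subset_right
    · have hle : ℱ s ≤ ⨆ s' ∈ Set.Iio tstar, ℱ s' :=
        le_biSup (fun s' => ℱ s') hs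
      exact h.2 _ ((hle _ hA).inter h.1) Set.inter_subset_right
  -- each M t is ℱ t measurable
  have hMmeas : ∀ t : ℝ, StronglyMeasurable[ℱ t] (M t) := by
    intro t
    refine stronglyMeasurable_of_tendsto atTop
      (fun n => (hτmart n).stronglyAdapted t) (tendsto_pi_nhds.2 fun ω => ?_)
    have hev : ∀ᶠ n in atTop, MeasureTheory.stoppedProcess M (fun ω => (τ n ω : WithTop ℝ)) t ω = M t ω := by
      filter_upwards [(hτtend ω).eventually_ge_atTop t] with n hn
      exact stoppedProcess_eq_of_le (WithTop.coe_le_coe.2 hn)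
    exact Tendsto.congr' (by filter_upwards [hev] with n hn; exact hn.symm) tendsto_const_nhds
  -- the deterministic values f t
  have hconst : ∀ t : ℝ, t < tstar → ∃ c : ℝ, ∀ᵐ ω ∂μ, ω ∈ B → M t ω = c := by
    intro t ht
    exact exists_ae_const_on_aux μ B hBmeas hB0 (ℱ.le t) (htriv t ht) (M t)
      (hMmeas t).measurable
  choose! f hf using hconst
  -- a suitable stopping time index: τ n ≥ tstar a.e. on B
  have hτB : ∃ n : ℕ, ∀ᵐ ω ∂μ, ω ∈ B → tstar ≤ τ n ω := by
    by_contra hcon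
    push_neg at hcon
    have hn' : ∀ n : ℕ, ∃ q : ℚ, (q:ℝ) < tstar ∧ ∀ᵐ ω ∂μ, ω ∈ B → τ n ω ≤ q := by
      intro n
      by_contra hq
      push_neg at hq
      refine hcon n ?_
      have hz : ∀ q : ℚ, (q:ℝ) < tstar → μ ({ω | τ n ω ≤ (q:ℝ)} ∩ B) = 0 := by
        intro q hqt
        rcases htriv q hqt _ (hτst' n q) with h | h
        · exact h
        · exfalso
          refine hq q hqt ?_
          have hsub : μ (B \ ({ω | τ n ω ≤ (q:ℝ)} ∩ B)) = 0 := by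
            have hms : MeasurableSet[m0] ({ω | τ n ω ≤ (q:ℝ)} ∩ B) :=
              (ℱ.le q _ (hτst' n q)).inter hBmeas
            have := measure_diff (show {ω | τ n ω ≤ (q:ℝ)} ∩ B ⊆ B from Set.inter_subset_right)
              hms.nullMeasurableSet (measure_ne_top μ _)
            rw [this, h, tsub_self]
          rw [ae_iff]
          refine measure_mono_null (fun ω hω => ?_) hsub
          simp only [Set.mem_setOf_eq, not_forall] at hω
          simp only [imp_false, not_not] at hω
          exact ⟨hω.1, fun hmem => absurd hmem.1 (not_le.2 hω.2)⟩
      have : μ ((⋃ q : {q : ℚ // (q:ℝ) < tstar}, ({ω | τ n ω ≤ (q:ℝ)} ∩ B))) = 0 :=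
        measure_iUnion_null fun q => hz q q.2
      rw [ae_iff]
      refine measure_mono_null (fun ω hω => ?_) this
      simp only [Set.mem_setOf_eq, not_forall] at hω
      simp only [imp_false, not_not] at hω
      obtain ⟨hωB, hωlt⟩ := hω
      have hlt : τ n ω < tstar := hωlt
      obtain ⟨q, hq1, hq2⟩ := exists_rat_btwn hlt
      exact Set.mem_iUnion.2 ⟨⟨q, hq2⟩, ⟨hq1.le, hωB⟩⟩
    choose qn hqn1 hqn2 using hn'
    have hall : ∀ᵐ ω ∂μ, ω ∈ B → ∀ n : ℕ, τ n ω ≤ qn n :=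
      (ae_all_iff.2 hqn2).mono fun ω hω hB n => hω n hB
    have hpos : μ (B ∩ {ω | ∀ n : ℕ, τ n ω ≤ (qn n : ℝ)}) ≠ 0 :=
      ae_on_ne_zero_aux hall hB0
    obtain ⟨ω, hω⟩ := MeasureTheory.nonempty_of_measure_ne_zero hpos
    obtain ⟨n, hn⟩ := ((hτtend ω).eventually_ge_atTop tstar).exists
    exact absurd (hω.2 n) (not_le.2 (lt_of_lt_of_le (hqn1 n) hn))
  obtain ⟨n0, hτ0B⟩ := hτB
  set τ0 : Ω → ℝ := τ n0 with hτ0def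
  set N : ℝ → Ω → ℝ := MeasureTheory.stoppedProcess M (fun ω => (τ0 ω : WithTop ℝ)) with hNdef
  have hNmart : Martingale N ℱ μ := hτmart n0
  have hτ0 : IsStoppingTime ℱ (fun ω => (τ0 ω : WithTop ℝ)) := hτst n0
  -- pick a reference path ω0 ∈ B
  have hE1 : ∀ᵐ ω ∂μ, ∀ q : ℚ, (q:ℝ) < tstar → (ω ∈ B → M q ω = f q) := by
    rw [ae_all_iff]
    intro q
    by_cases hq : (q:ℝ) < tstar
    · filter_upwards [hf q hq] with ω hω _ hB; exact hω hB
    · filter_upwards with ω hcon; exact absurd hcon (by simp [hq])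
  have hωex : ∃ ω0, ω0 ∈ B ∧ (∀ q : ℚ, (q:ℝ) < tstar → M q ω0 = f q) := by
    have hne : μ (B ∩ {ω | ∀ q : ℚ, (q:ℝ) < tstar → (ω ∈ B → M q ω = f q)}) ≠ 0 :=
      ae_on_ne_zero_aux (hE1.mono fun ω hω _ => hω) hB0
    obtain ⟨ω0, hω0⟩ := MeasureTheory.nonempty_of_measure_ne_zero hne
    exact ⟨ω0, hω0.1, fun q hq => hω0.2 q hq hω0.1⟩
  obtain ⟨ω0, hω0B, hω0q⟩ := hωex
  set F : ℝ → ℝ := fun t => M t ω0 with hFdef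
  have hFcont : Continuous F := hMcont ω0
  -- a.e. on B, M agrees with F on [0, tstar)
  have hBF : ∀ᵐ ω ∂μ, ω ∈ B → ∀ t : ℝ, 0 ≤ t → t < tstar → M t ω = F t := by
    filter_upwards [hE1] with ω hω hωB t ht0 htst
    refine eq_on_Icc_of_rat_aux (hMcont ω) hFcont (s := t) ?_ t ht0 le_rfl
    intro q hq0 hqt
    rw [hω q (lt_of_le_of_lt hqt htst) hωB]
    exact (hω0q q (lt_of_le_of_lt hqt htst)).symm
  -- the key claim : F is constant on [0, tstar)
  have hFconst : ∀ t : ℝ, 0 ≤ t → t < tstar → F t = F 0 := by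
    set D : ℝ → Set Ω := fun s =>
      {ω | (∀ q : ℚ, 0 ≤ (q:ℝ) → (q:ℝ) ≤ s → M q ω = F q) ∧ s < τ0 ω} with hDdef
    have hDmeas : ∀ s : ℝ, MeasurableSet[ℱ s] (D s) := by
      intro s
      have h1 : MeasurableSet[ℱ s] {ω | ∀ q : ℚ, 0 ≤ (q:ℝ) → (q:ℝ) ≤ s → M q ω = F q} := by
        have heq : {ω | ∀ q : ℚ, 0 ≤ (q:ℝ) → (q:ℝ) ≤ s → M q ω = F q} =
            ⋂ q : ℚ, {ω | 0 ≤ (q:ℝ) → (q:ℝ) ≤ s → M q ω = F q} := by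
          ext ω; simp [Set.mem_iInter]
        rw [heq]
        refine MeasurableSet.iInter fun q => ?_
        by_cases h0 : 0 ≤ (q:ℝ)
        · by_cases hqs : (q:ℝ) ≤ s
          · have heq2 : {ω | 0 ≤ (q:ℝ) → (q:ℝ) ≤ s → M q ω = F q} = {ω | M q ω = F q} := by
              ext ω; simp [h0, hqs]
            rw [heq2]
            exact (ℱ.mono hqs) _ ((hMmeas q).measurable (measurableSet_singleton (F q)))
          · have heq2 : {ω | 0 ≤ (q:ℝ) → (q:ℝ) ≤ s → M q ω = F q} = Set.univ := by
              ext ω; simp [hqs]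
            rw [heq2]; exact MeasurableSet.univ
        · have heq2 : {ω | 0 ≤ (q:ℝ) → (q:ℝ) ≤ s → M q ω = F q} = Set.univ := by
            ext ω; simp [h0]
          rw [heq2]; exact MeasurableSet.univ
      have h2 : MeasurableSet[ℱ s] {ω | s < τ0 ω} := by
        have heq : {ω | s < τ0 ω} = {ω | τ0 ω ≤ s}ᶜ := by
          ext ω; simp [not_le]
        rw [heq]; exact (by simpa using hτ0 s : MeasurableSet[ℱ s] {ω | τ0 ω ≤ s}).compl
      exact h1.inter h2
    have hDmeas0 : ∀ s : ℝ, MeasurableSet[m0] (D s) := fun s => ℱ.le s _ (hDmeas s)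
    have hDanti : ∀ s s' : ℝ, s ≤ s' → D s' ⊆ D s := by
      intro s s' h ω hω
      exact ⟨fun q hq0 hqs => hω.1 q hq0 (hqs.trans h), lt_of_le_of_lt h hω.2⟩
    have hBD : ∀ s : ℝ, s < tstar → ∀ᵐ ω ∂μ, ω ∈ B → ω ∈ D s := by
      intro s hs
      filter_upwards [hBF, hτ0B] with ω h1 h2 hωB
      exact ⟨fun q hq0 hqs => h1 hωB q hq0 (lt_of_le_of_lt hqs hs),
        lt_of_lt_of_le hs (h2 hωB)⟩
    have hμBD : ∀ s : ℝ, s < tstar → μ B ≤ μ (D s) := by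
      intro s hs
      exact measure_mono_ae ((hBD s hs).mono fun ω h => h)
    have hDF : ∀ s : ℝ, 0 ≤ s → ∀ ω ∈ D s, ∀ r : ℝ, 0 ≤ r → r ≤ s → M r ω = F r := by
      intro s hs0 ω hω
      exact eq_on_Icc_of_rat_aux (hMcont ω) hFcont (fun q hq0 hqs => hω.1 q hq0 hqs)
    have hDN : ∀ s : ℝ, 0 ≤ s → ∀ ω ∈ D s, N s ω = F s := by
      intro s hs0 ω hω
      have h1 : N s ω = M s ω := stoppedProcess_eq_of_le (WithTop.coe_le_coe.2 hω.2.le)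
      rw [h1]
      exact hDF s hs0 ω hω s hs0 le_rfl
    have hNcont : ∀ ω, Continuous fun t : ℝ => N t ω := by
      intro ω
      have hNeq : (fun t : ℝ => N t ω) = fun t : ℝ => M (min t (τ0 ω)) ω := by
        funext t
        show M (min (t : WithTop ℝ) (τ0 ω)).untopA ω = _
        rw [← WithTop.coe_min]
        rfl
      rw [hNeq]
      exact (hMcont ω).comp (continuous_id.min continuous_const)
    -- THE KEY ESTIMATE
    have key : ∀ u v : ℝ, 0 ≤ u → u ≤ v → v < tstar → ∀ ε : ℝ,
        (∀ r : ℝ, u ≤ r → r ≤ v → |F r - F u| ≤ ε) →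
        |F v - F u| * (μ B).toReal ≤ ε * ((μ (D u)).toReal - (μ (D v)).toReal) := by
      intro u v hu0 huv hvt ε hosc
      have hε0 : 0 ≤ ε := by simpa using hosc u le_rfl huv
      have hvu0 : (0:ℝ) ≤ v - u := by linarith
      set sg : ℕ → ℕ → ℝ := fun k i => u + (v - u) * i / 2 ^ k with hsgdef
      have h2k : ∀ k : ℕ, (0:ℝ) < 2 ^ k := fun k => by positivity
      have hsg_lb : ∀ k i, u ≤ sg k i := by
        intro k i
        have h' : (0:ℝ) ≤ (v - u) * i / 2 ^ k :=
          div_nonneg (mul_nonneg hvu0 (Nat.cast_nonneg i)) (h2k k).le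
        simp only [hsgdef]; linarith
      have hsg_mono : ∀ k, Monotone (sg k) := by
        intro k a b hab
        simp only [hsgdef]
        gcongr
      have hsg_top : ∀ k, sg k (2 ^ k) = v := by
        intro k
        simp only [hsgdef]
        push_cast
        field_simp
        ring
      have hsg_ub : ∀ k i, i ≤ 2 ^ k → sg k i ≤ v := by
        intro k i hi
        rw [← hsg_top k]
        exact hsg_mono k hi
      have hsg_nest : ∀ k i, sg (k + 1) (2 * i) = sg k i := by
        intro k i
        simp only [hsgdef]
        rw [pow_succ]
        push_cast
        ring
      have hsg_succ : ∀ k i, sg k (i + 1) = sg k i + (v - u) / 2 ^ k := by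
        intro k i
        simp only [hsgdef]
        push_cast
        ring
      have hJex : ∀ (k : ℕ) (ω : Ω), ∃ i : ℕ, i = 2 ^ k ∨ ω ∉ D (sg k i) :=
        fun k ω => ⟨2 ^ k, Or.inl rfl⟩
      set J : ℕ → Ω → ℕ := fun k ω => Nat.find (hJex k ω) with hJdef
      have hJle : ∀ k ω, J k ω ≤ 2 ^ k := fun k ω => Nat.find_le (Or.inl rfl)
      have hJlt : ∀ k ω i, i < J k ω → ω ∈ D (sg k i) := by
        intro k ω i hi
        have h' := Nat.find_min (hJex k ω) hi
        push_neg at h'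
        exact h'.2
      have hJspec : ∀ k ω, J k ω = 2 ^ k ∨ ω ∉ D (sg k (J k ω)) :=
        fun k ω => Nat.find_spec (hJex k ω)
      set ρ : ℕ → Ω → ℝ := fun k ω => sg k (J k ω) with hρdef
      have hJfiber : ∀ k i, MeasurableSet[ℱ (sg k i)] {ω | J k ω = i} := by
        intro k i
        by_cases hi : i ≤ 2 ^ k
        · have heq : {ω | J k ω = i} =
              (⋂ j ∈ Finset.range i, D (sg k j)) ∩
                (if i = 2 ^ k then Set.univ else (D (sg k i))ᶜ) := by
            ext ω
            simp only [Set.mem_inter_iff, Set.mem_iInter, Finset.mem_range, Set.mem_setOf_eq]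
            constructor
            · intro h'
              subst h'
              refine ⟨fun j hj => hJlt k ω j hj, ?_⟩
              by_cases hcase : J k ω = 2 ^ k
              · simp [hcase]
              · simp only [hcase, if_false]
                rcases hJspec k ω with h'' | h''
                · exact absurd h'' hcase
                · exact h''
            · rintro ⟨hall, hlast⟩
              by_cases hcase : i = 2 ^ k
              · refine le_antisymm (hcase ▸ hJle k ω) ?_
                by_contra hcon
                push_neg at hcon
                rcases hJspec k ω with h'' | h''
                · omega
                · exact h'' (hall _ hcon)
              · simp only [hcase, if_false] at hlast
                refine le_antisymm ?_ ?_
                · by_contra hcon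
                  push_neg at hcon
                  exact hlast (hJlt k ω i hcon)
                · by_contra hcon
                  push_neg at hcon
                  rcases hJspec k ω with h'' | h''
                  · omega
                  · exact h'' (hall _ hcon)
          rw [heq]
          refine MeasurableSet.inter ?_ ?_
          · refine MeasurableSet.biInter (Set.to_countable _) fun j hj => ?_
            have hj' : j < i := Finset.mem_range.1 hj
            exact (ℱ.mono (hsg_mono k hj'.le)) _ (hDmeas (sg k j))
          · by_cases hcase : i = 2 ^ k
            · simp only [hcase, if_true]
              exact MeasurableSet.univ
            · simp only [hcase, if_false]
              exact (hDmeas (sg k i)).compl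
        · have heq : {ω | J k ω = i} = ∅ := by
            ext ω
            simp only [Set.mem_setOf_eq, Set.mem_empty_iff_false, iff_false]
            intro h'
            exact hi (h' ▸ hJle k ω)
          rw [heq]
          exact @MeasurableSet.empty Ω (ℱ (sg k i))
      have hρst : ∀ k, IsStoppingTime ℱ (fun ω => (ρ k ω : WithTop ℝ)) := by
        intro k t
        simp only [WithTop.coe_le_coe]
        have heq : {ω | ρ k ω ≤ t} = ⋃ i : ℕ, {ω | J k ω = i ∧ sg k i ≤ t} := by
          ext ω
          simp only [Set.mem_setOf_eq, Set.mem_iUnion]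
          constructor
          · intro h''
            exact ⟨J k ω, rfl, h''⟩
          · rintro ⟨i, hJi, hit⟩
            show sg k (J k ω) ≤ t
            rw [hJi]
            exact hit
        rw [heq]
        refine MeasurableSet.iUnion fun i => ?_
        by_cases hit : sg k i ≤ t
        · have heq2 : {ω | J k ω = i ∧ sg k i ≤ t} = {ω | J k ω = i} := by
            ext ω; simp [hit]
          rw [heq2]
          exact (ℱ.mono hit) _ (hJfiber k i)
        · have heq2 : {ω | J k ω = i ∧ sg k i ≤ t} = ∅ := by
            ext ω; simp [hit]
          rw [heq2]
          exact @MeasurableSet.empty Ω (ℱ t)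
      have hρ_lb : ∀ k (ω : Ω), u ≤ ρ k ω := fun k ω => hsg_lb k _
      have hρ_ub : ∀ k (ω : Ω), ρ k ω ≤ v := fun k ω => hsg_ub k _ (hJle k ω)
      have hρ_anti : ∀ ω, Antitone fun k => ρ k ω := by
        intro ω
        refine antitone_nat_of_succ_le fun k => ?_
        rcases hJspec k ω with h' | h'
        · calc ρ (k + 1) ω ≤ v := hρ_ub (k + 1) ω
            _ = sg k (2 ^ k) := (hsg_top k).symm
            _ = ρ k ω := by show sg k (2^k) = sg k (J k ω); rw [h']
        · have hJ2 : J (k + 1) ω ≤ 2 * J k ω := by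
            refine Nat.find_le (Or.inr ?_)
            rw [hsg_nest]
            exact h'
          calc ρ (k + 1) ω ≤ sg (k + 1) (2 * J k ω) := hsg_mono (k + 1) hJ2
            _ = sg k (J k ω) := hsg_nest k _
            _ = ρ k ω := rfl
      set ρinf : Ω → ℝ := fun ω => ⨅ k, ρ k ω with hρinfdef
      have hρbdd : ∀ ω, BddBelow (Set.range fun k => ρ k ω) := by
        intro ω
        refine ⟨u, ?_⟩
        rintro x ⟨k, rfl⟩
        exact hρ_lb k ω
      have hρtend : ∀ ω, Tendsto (fun k => ρ k ω) atTop (𝓝 (ρinf ω)) :=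
        fun ω => tendsto_atTop_ciInf (hρ_anti ω) (hρbdd ω)
      have hρinf_lb : ∀ ω, u ≤ ρinf ω := fun ω => le_ciInf fun k => hρ_lb k ω
      have hρinf_ub : ∀ ω, ρinf ω ≤ v := fun ω => (ciInf_le (hρbdd ω) 0).trans (hρ_ub 0 ω)
      have hρinf_le : ∀ k (ω : Ω), ρinf ω ≤ ρ k ω := fun k ω => ciInf_le (hρbdd ω) k
      set X : Ω → ℝ := fun ω => N (ρinf ω) ω with hXdef
      have hXtendpt : ∀ ω, Tendsto (fun k => stoppedValue N (fun ω => (ρ k ω : WithTop ℝ)) ω) atTop (𝓝 (X ω)) :=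
        fun ω => ((hNcont ω).tendsto (ρinf ω)).comp (hρtend ω)
      have hle : ∀ k, (hρst k).measurableSpace ≤ m0 :=
        fun k => (hρst k).measurableSpace_le_of_le (fun ω => WithTop.coe_le_coe.2 (hρ_ub k ω))
      have hcrange : ∀ k, (Set.range (fun ω => (ρ k ω : WithTop ℝ))).Countable := by
        intro k
        refine Set.Countable.mono ?_ (Set.countable_range (fun i => (sg k i : WithTop ℝ)))
        rintro x ⟨ω, rfl⟩
        exact ⟨J k ω, rfl⟩
      have hXk : ∀ k, stoppedValue N (fun ω => (ρ k ω : WithTop ℝ)) =ᵐ[μ] μ[N v | (hρst k).measurableSpace] := fun k =>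
        hNmart.stoppedValue_ae_eq_condExp_of_le_const_of_countable_range
          (hρst k) (fun ω => WithTop.coe_le_coe.2 (hρ_ub k ω)) (hcrange k)
      have hUI : UniformIntegrable (fun k => stoppedValue N (fun ω => (ρ k ω : WithTop ℝ))) 1 μ :=
        ((hNmart.integrable v).uniformIntegrable_condExp hle).ae_eq
          fun k => (hXk k).symm
      have hXmeasae : AEStronglyMeasurable X μ :=
        aestronglyMeasurable_of_tendsto_ae atTop (fun k => hUI.1 k)
          (Eventually.of_forall hXtendpt)
      have hXmem : MemLp X 1 μ := by
        obtain ⟨C, hC⟩ := hUI.2.2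
        refine ⟨hXmeasae, ?_⟩
        have hlim := Lp.eLpNorm_lim_le_liminf_eLpNorm (p := 1) (fun k => hUI.1 k) X
          (Eventually.of_forall hXtendpt)
        refine lt_of_le_of_lt hlim (lt_of_le_of_lt ?_ (ENNReal.coe_lt_top (r := C)))
        have hll : atTop.liminf (fun k : ℕ => eLpNorm (stoppedValue N (fun ω => (ρ k ω : WithTop ℝ))) 1 μ) ≤
            atTop.liminf (fun _ : ℕ => (C : ENNReal)) := by
          refine Filter.liminf_le_liminf (Eventually.of_forall fun k => hC k) ?_ ?_
          · isBoundedDefault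
          · isBoundedDefault
        simpa using hll
      have hXint : Integrable X μ := memLp_one_iff_integrable.1 hXmem
      have hXkint : ∀ k, Integrable (stoppedValue N (fun ω => (ρ k ω : WithTop ℝ))) μ :=
        fun k => integrable_condExp.congr (hXk k).symm
      have hL1 : Tendsto (fun k => eLpNorm (stoppedValue N (fun ω => (ρ k ω : WithTop ℝ)) - X) 1 μ) atTop (𝓝 0) :=
        tendsto_Lp_finite_of_tendsto_ae le_rfl ENNReal.one_ne_top (fun k => hUI.1 k)
          hXmem hUI.2.1 (Eventually.of_forall hXtendpt)
      have hint_tend : Tendsto (fun k => ∫ ω, stoppedValue N (fun ω => (ρ k ω : WithTop ℝ)) ω ∂μ) atTop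
          (𝓝 (∫ ω, X ω ∂μ)) :=
        tendsto_integral_of_L1' X hXmeasae (Eventually.of_forall hXkint) hL1
      have hIk : ∀ k, ∫ ω, stoppedValue N (fun ω => (ρ k ω : WithTop ℝ)) ω ∂μ = ∫ ω, N v ω ∂μ := by
        intro k
        rw [integral_congr_ae (hXk k), integral_condExp (hle k)]
      have hXNv : ∫ ω, X ω ∂μ = ∫ ω, N v ω ∂μ :=
        tendsto_nhds_unique (by simpa only [hIk] using hint_tend) tendsto_const_nhds
      have hNvu : ∫ ω, N v ω ∂μ = ∫ ω, N u ω ∂μ := by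
        have h' := hNmart.2 u v huv
        calc ∫ ω, N v ω ∂μ = ∫ ω, (μ[N v | ℱ u]) ω ∂μ := (integral_condExp (ℱ.le u)).symm
          _ = ∫ ω, N u ω ∂μ := integral_congr_ae h'
      have hXNu : ∫ ω, X ω ∂μ = ∫ ω, N u ω ∂μ := hXNv.trans hNvu
      have hXoff : ∀ ω, ω ∉ D u → X ω = N u ω := by
        intro ω hω
        have hJ0 : ∀ k, J k ω = 0 := by
          intro k
          show Nat.find (hJex k ω) = 0
          rw [Nat.find_eq_zero]
          refine Or.inr ?_
          have hsg0 : sg k 0 = u := by simp [hsgdef]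
          rwa [hsg0]
        have hρu : ∀ k, ρ k ω = u := by
          intro k
          show sg k (J k ω) = u
          rw [hJ0 k]
          simp [hsgdef]
        have hρinfu : ρinf ω = u := by
          show (⨅ k, ρ k ω) = u
          simp only [hρu]
          exact ciInf_const
        show N (ρinf ω) ω = N u ω
        rw [hρinfu]
      have hXon : ∀ ω, ω ∈ D u → X ω = F (ρinf ω) := by
        intro ω hω
        rcases eq_or_lt_of_le (hρinf_lb ω) with heq | hlt
        · show N (ρinf ω) ω = F (ρinf ω)
          rw [← heq]
          exact hDN u hu0 ω hω
        · have hJpos : ∀ k, 1 ≤ J k ω := by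
            intro k
            rcases Nat.eq_zero_or_pos (J k ω) with h0 | h1
            · exfalso
              have hρu : ρ k ω = u := by
                show sg k (J k ω) = u
                rw [h0]
                simp [hsgdef]
              have h2 := hρinf_le k ω
              rw [hρu] at h2
              exact absurd (lt_of_lt_of_le hlt h2) (lt_irrefl u)
            · exact h1
          set p : ℕ → ℝ := fun k => sg k (J k ω - 1) with hpdef
          have hpD : ∀ k, ω ∈ D (p k) := fun k =>
            hJlt k ω _ (Nat.sub_lt (hJpos k) one_pos)
          have hpval : ∀ k, p k = ρ k ω - (v - u) / 2 ^ k := by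
            intro k
            have hsucc : J k ω - 1 + 1 = J k ω := Nat.succ_pred_eq_of_pos (hJpos k)
            have h' := hsg_succ k (J k ω - 1)
            rw [hsucc] at h'
            show sg k (J k ω - 1) = sg k (J k ω) - (v - u) / 2 ^ k
            rw [h']
            ring
          have hmesh : Tendsto (fun k : ℕ => (v - u) / 2 ^ k) atTop (𝓝 0) := by
            have h1 : Tendsto (fun k : ℕ => ((1:ℝ)/2) ^ k) atTop (𝓝 0) :=
              tendsto_pow_atTop_nhds_zero_of_lt_one (by norm_num) (by norm_num)
            have h2 := h1.const_mul (v - u)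
            rw [mul_zero] at h2
            refine h2.congr fun k => ?_
            rw [div_pow, one_pow, mul_one_div]
          have hptend : Tendsto p atTop (𝓝 (ρinf ω)) := by
            have h1 : Tendsto (fun k => ρ k ω - (v - u) / 2 ^ k) atTop (𝓝 (ρinf ω - 0)) :=
              (hρtend ω).sub hmesh
            rw [sub_zero] at h1
            exact h1.congr fun k => (hpval k).symm
          have hτr : ρinf ω ≤ τ0 ω :=
            le_of_tendsto hptend (Eventually.of_forall fun k => (hpD k).2.le)
          have hp0 : ∀ k, 0 ≤ p k := fun k => hu0.trans (hsg_lb k _)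
          have hMp : ∀ k, M (p k) ω = F (p k) := fun k =>
            hDF (p k) (hp0 k) ω (hpD k) (p k) (hp0 k) le_rfl
          have h1 : Tendsto (fun k => M (p k) ω) atTop (𝓝 (M (ρinf ω) ω)) :=
            ((hMcont ω).tendsto (ρinf ω)).comp hptend
          have h2 : Tendsto (fun k => F (p k)) atTop (𝓝 (F (ρinf ω))) :=
            (hFcont.tendsto (ρinf ω)).comp hptend
          have hMF : M (ρinf ω) ω = F (ρinf ω) :=
            tendsto_nhds_unique (Tendsto.congr (fun k => hMp k) h1) h2
          show N (ρinf ω) ω = F (ρinf ω)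
          have hN' : N (ρinf ω) ω = M (ρinf ω) ω := stoppedProcess_eq_of_le (WithTop.coe_le_coe.2 hτr)
          rw [hN', hMF]
      have hXDv : ∀ ω, ω ∈ D v → ρinf ω = v := by
        intro ω hω
        have hρv : ∀ k, ρ k ω = v := by
          intro k
          have hJfull : J k ω = 2 ^ k := by
            rcases hJspec k ω with h' | h'
            · exact h'
            · exact absurd (hDanti _ v (hρ_ub k ω) hω) h'
          show sg k (J k ω) = v
          rw [hJfull]
          exact hsg_top k
        show (⨅ k, ρ k ω) = v
        simp only [hρv]
        exact ciInf_const
      -- final integral computation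
      have hNuint : Integrable (N u) μ := hNmart.integrable u
      have hcomplX : ∫ ω in (D u)ᶜ, X ω ∂μ = ∫ ω in (D u)ᶜ, N u ω ∂μ :=
        setIntegral_congr_fun (hDmeas0 u).compl fun ω hω => hXoff ω hω
      have hsplit1 : ∫ ω in D u, X ω ∂μ + ∫ ω in (D u)ᶜ, X ω ∂μ = ∫ ω, X ω ∂μ :=
        integral_add_compl (hDmeas0 u) hXint
      have hsplit2 : ∫ ω in D u, N u ω ∂μ + ∫ ω in (D u)ᶜ, N u ω ∂μ = ∫ ω, N u ω ∂μ :=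
        integral_add_compl (hDmeas0 u) hNuint
      have hDuX : ∫ ω in D u, X ω ∂μ = ∫ ω in D u, N u ω ∂μ := by
        have h' := hXNu
        rw [← hsplit1, ← hsplit2, hcomplX] at h'
        linarith
      have hDuNu : ∫ ω in D u, N u ω ∂μ = F u * (μ (D u)).toReal := by
        rw [setIntegral_congr_fun (hDmeas0 u) (fun ω hω => hDN u hu0 ω hω),
          setIntegral_const, smul_eq_mul, measureReal_def, mul_comm]
      have hDvX : ∫ ω in D v, X ω ∂μ = F v * (μ (D v)).toReal := by
        have heq : Set.EqOn X (fun _ => F v) (D v) := by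
          intro ω hω
          rw [hXon ω (hDanti u v huv hω), hXDv ω hω]
        rw [setIntegral_congr_fun (hDmeas0 v) heq, setIntegral_const, smul_eq_mul, measureReal_def, mul_comm]
      have hdiffX : ∫ ω in D u \ D v, X ω ∂μ =
          F u * (μ (D u)).toReal - F v * (μ (D v)).toReal := by
        rw [integral_diff (hDmeas0 v) hXint.integrableOn (hDanti u v huv), hDuX, hDuNu, hDvX]
      have hμdiffle : μ (D v) ≤ μ (D u) := measure_mono (hDanti u v huv)
      have hμdiff : (μ (D u \ D v)).toReal = (μ (D u)).toReal - (μ (D v)).toReal := by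
        rw [measure_diff (hDanti u v huv) (hDmeas0 v).nullMeasurableSet (measure_ne_top μ _),
          ENNReal.toReal_sub_of_le hμdiffle (measure_ne_top μ _)]
      have hbound : |∫ ω in D u \ D v, (X ω - F u) ∂μ| ≤
          ε * ((μ (D u)).toReal - (μ (D v)).toReal) := by
        have h' := norm_setIntegral_le_of_norm_le_const_ae'
          (measure_lt_top μ (D u \ D v))
          (C := ε) (f := fun ω => X ω - F u) ?_
        · rw [measureReal_def, hμdiff] at h'
          rwa [Real.norm_eq_abs] at h'
        · refine Eventually.of_forall fun ω hω => ?_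
          rw [Real.norm_eq_abs]
          show |X ω - F u| ≤ ε
          rw [hXon ω hω.1]
          exact hosc (ρinf ω) (hρinf_lb ω) (hρinf_ub ω)
      have hconstint : ∫ _ in D u \ D v, F u ∂μ =
          F u * ((μ (D u)).toReal - (μ (D v)).toReal) := by
        rw [setIntegral_const, smul_eq_mul, measureReal_def, hμdiff, mul_comm]
      have hsubint : ∫ ω in D u \ D v, (X ω - F u) ∂μ = (F u - F v) * (μ (D v)).toReal := by
        rw [integral_sub hXint.integrableOn
          integrableOn_const, hdiffX, hconstint]
        ring
      have hfinal : |F v - F u| * (μ (D v)).toReal ≤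
          ε * ((μ (D u)).toReal - (μ (D v)).toReal) := by
        have h' := hbound
        rw [hsubint] at h'
        rwa [abs_mul, abs_of_nonneg ENNReal.toReal_nonneg, abs_sub_comm] at h'
      have hμBv : (μ B).toReal ≤ (μ (D v)).toReal :=
        ENNReal.toReal_mono (measure_ne_top μ _) (hμBD v hvt)
      calc |F v - F u| * (μ B).toReal ≤ |F v - F u| * (μ (D v)).toReal :=
            mul_le_mul_of_nonneg_left hμBv (abs_nonneg _)
        _ ≤ ε * ((μ (D u)).toReal - (μ (D v)).toReal) := hfinal
    -- chaining the key estimate along a fine partition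
    intro t ht0 htst
    rcases eq_or_lt_of_le ht0 with h0 | h0
    · rw [← h0]
    · have hbpos : 0 < (μ B).toReal := ENNReal.toReal_pos hB0 (measure_ne_top μ B)
      have habs : ∀ ε' : ℝ, 0 < ε' → |F t - F 0| ≤ ε' := by
        intro ε' hε'
        set ε : ℝ := ε' * (μ B).toReal with hεdef
        have hεpos : 0 < ε := mul_pos hε' hbpos
        obtain ⟨δ, hδpos, hδ⟩ := Metric.uniformContinuousOn_iff.1
          ((isCompact_Icc (a := (0:ℝ)) (b := t)).uniformContinuousOn_of_continuous
            hFcont.continuousOn) ε hεpos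
        obtain ⟨m', hm'⟩ := exists_nat_gt (t / δ)
        set m : ℕ := m' + 1 with hmdef
        have hmpos : (0:ℝ) < m := by positivity
        have htm : t / m < δ := by
          rw [div_lt_iff₀ hmpos, mul_comm δ (m:ℝ)]
          have h1 : t / δ < m := lt_of_lt_of_le hm' (by exact_mod_cast Nat.le_succ m')
          have h2 : t / δ * δ < m * δ := mul_lt_mul_of_pos_right h1 hδpos
          have h3 : t / δ * δ = t := div_mul_cancel₀ t hδpos.ne'
          linarith
        set r : ℕ → ℝ := fun i => i * t / m with hrdef
        have hr0 : r 0 = 0 := by simp [hrdef]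
        have hrm : r m = t := by
          have hm0 : (m:ℝ) ≠ 0 := hmpos.ne'
          simp only [hrdef]
          field_simp
        have hrmono : Monotone r := by
          intro a b hab
          simp only [hrdef]
          refine (div_le_div_iff_of_pos_right hmpos).2 ?_
          exact mul_le_mul_of_nonneg_right (Nat.cast_le.2 hab) ht0
        have hrmem : ∀ i, i ≤ m → r i ∈ Set.Icc (0:ℝ) t := by
          intro i hi
          constructor
          · have : (0:ℝ) ≤ (i:ℝ) * t / m :=
              div_nonneg (mul_nonneg (Nat.cast_nonneg i) ht0) hmpos.le
            simpa [hrdef] using this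
          · rw [← hrm]
            exact hrmono hi
        have hrsucc : ∀ i : ℕ, r (i + 1) - r i = t / m := by
          intro i
          simp only [hrdef]
          push_cast
          ring
        have hstep : ∀ i, i < m →
            |F (r (i+1)) - F (r i)| * (μ B).toReal ≤
              ε * ((μ (D (r i))).toReal - (μ (D (r (i+1)))).toReal) := by
          intro i hi
          refine key (r i) (r (i+1)) (hrmem i hi.le).1 (hrmono (Nat.le_succ i))
            (lt_of_le_of_lt (hrmem (i+1) hi).2 htst) ε ?_
          intro s hs1 hs2
          have hsmem : s ∈ Set.Icc (0:ℝ) t :=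
            ⟨(hrmem i hi.le).1.trans hs1, hs2.trans (hrmem (i+1) hi).2⟩
          have hdist : dist s (r i) < δ := by
            rw [Real.dist_eq, abs_of_nonneg (by linarith)]
            have h' := hrsucc i
            have : s - r i ≤ t / m := by linarith
            linarith
          have := hδ s hsmem (r i) (hrmem i hi.le) hdist
          rw [Real.dist_eq] at this
          exact this.le
        have htele1 : F t - F 0 = ∑ i ∈ Finset.range m, (F (r (i+1)) - F (r i)) := by
          have h' := Finset.sum_range_sub (fun i => F (r i)) m
          rw [hr0, hrm] at h'
          exact h'.symm
        have htele2 : ∑ i ∈ Finset.range m,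
            ((μ (D (r i))).toReal - (μ (D (r (i+1)))).toReal) =
            (μ (D (r 0))).toReal - (μ (D (r m))).toReal :=
          Finset.sum_range_sub' (fun i => (μ (D (r i))).toReal) m
        have hsum : |F t - F 0| * (μ B).toReal ≤ ε := by
          calc |F t - F 0| * (μ B).toReal
              ≤ (∑ i ∈ Finset.range m, |F (r (i+1)) - F (r i)|) * (μ B).toReal := by
                refine mul_le_mul_of_nonneg_right ?_ ENNReal.toReal_nonneg
                rw [htele1]
                exact Finset.abs_sum_le_sum_abs _ _
            _ = ∑ i ∈ Finset.range m, |F (r (i+1)) - F (r i)| * (μ B).toReal := by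
                rw [Finset.sum_mul]
            _ ≤ ∑ i ∈ Finset.range m,
                ε * ((μ (D (r i))).toReal - (μ (D (r (i+1)))).toReal) :=
                Finset.sum_le_sum fun i hi => hstep i (Finset.mem_range.1 hi)
            _ = ε * ((μ (D (r 0))).toReal - (μ (D (r m))).toReal) := by
                rw [← Finset.mul_sum, htele2]
            _ ≤ ε * 1 := by
                refine mul_le_mul_of_nonneg_left ?_ hεpos.le
                have h1 : (μ (D (r 0))).toReal ≤ 1 := by
                  have h2 : μ (D (r 0)) ≤ 1 := prob_le_one
                  have := ENNReal.toReal_mono (by norm_num) h2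
                  simpa using this
                have h2 : 0 ≤ (μ (D (r m))).toReal := ENNReal.toReal_nonneg
                linarith
            _ = ε := mul_one ε
        rw [hεdef] at hsum
        exact le_of_mul_le_mul_right (by linarith) hbpos
      have hzero : |F t - F 0| ≤ 0 := by
        refine le_of_forall_pos_le_add fun ε' hε' => ?_
        simpa using habs ε' hε'
      have := abs_nonpos_iff.1 hzero
      linarith [this]
  filter_upwards [hBF] with ω hω hωB t ht0 htst
  rw [hω hωB t ht0 htst, hω hωB 0 le_rfl htstar, hFconst t ht0 htst]
end

section
/- Let M be the set of probability measures ℚ on a measurable space (Ω,F) such that ℚ is absolutely continuous with respect to some measure in a fixed family P, and such that finitely many fixed random variables ψ_1,...,ψ_n satisfy E_ℚ[ψ_i] = 0 and E_ℚ[ψ_i²] < ∞. Suppose ℚ ∈ M has the property that every X ∈ L²(F,ℚ) can be written as X = a_0 + a_1ψ_1 + ··· + a_nψ_n ℚ-a.s. for real constants a_0,...,a_n. Then ℚ is an extreme point of M. -/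
open MeasureTheory

/-- Membership in the set `M` of calibrated measures: `Q` is a probability measure
absolutely continuous w.r.t. some prior in `P`, and each statically traded payoff `ψ i`
is square-integrable under `Q` with `E_Q[ψ i] = 0`. -/
def IsCalibrated {Ω : Type*} [MeasurableSpace Ω] (P : Set (Measure Ω)) {n : ℕ}
    (ψ : Fin n → Ω → ℝ) (Q : Measure Ω) : Prop :=
  IsProbabilityMeasure Q ∧ (∃ P₀ ∈ P, Q ≪ P₀) ∧
    ∀ i, MemLp (ψ i) 2 Q ∧ ∫ ω, ψ i ω ∂Q = 0

lemma key_static_complete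
    {Ω : Type*} [MeasurableSpace Ω] {n : ℕ} (ψ : Fin n → Ω → ℝ)
    (Q Q₁ R : Measure Ω) (hQprob : IsProbabilityMeasure Q)
    (hQ1prob : IsProbabilityMeasure Q₁)
    (hψQ : ∀ i, MemLp (ψ i) 2 Q ∧ ∫ ω, ψ i ω ∂Q = 0)
    (hψQ1 : ∀ i, MemLp (ψ i) 2 Q₁ ∧ ∫ ω, ψ i ω ∂Q₁ = 0)
    (hcomplete : ∀ X : Ω → ℝ, MemLp X 2 Q →
      ∃ (a₀ : ℝ) (a : Fin n → ℝ),
        X =ᵐ[Q] fun ω => a₀ + ∑ i, a i * ψ i ω)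
    {l : ℝ} (hl : 0 < l)
    (hdecomp : Q = ENNReal.ofReal l • Q₁ + R) : Q₁ = Q := by
  have hl0 : ENNReal.ofReal l ≠ 0 := by
    simp [ENNReal.ofReal_eq_zero, not_le, hl]
  -- `l • Q₁ ≤ Q`
  have hle : ENNReal.ofReal l • Q₁ ≤ Q := by
    rw [hdecomp]; exact Measure.le_add_right le_rfl
  -- absolute continuity
  have hac : Q₁ ≪ Q := by
    refine Measure.AbsolutelyContinuous.mk fun s hs h0 => ?_
    have : (ENNReal.ofReal l • Q₁) s = 0 :=
      le_antisymm (h0 ▸ hle s) zero_le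
    simpa [Measure.smul_apply, hl0] using this
  set Z : Ω → ENNReal := Q₁.rnDeriv Q with hZ
  -- a.e. bound on the RN derivative
  have hZbd : ∀ᵐ ω ∂Q, (Z ω).toReal ≤ 1 / l := by
    have h1 : (ENNReal.ofReal l • Q₁).rnDeriv Q ≤ᵐ[Q] 1 :=
      Measure.rnDeriv_le_one_of_le hle
    have h2 : (ENNReal.ofReal l • Q₁).rnDeriv Q =ᵐ[Q]
        ENNReal.ofReal l • Q₁.rnDeriv Q :=
      Measure.rnDeriv_smul_left_of_ne_top Q₁ Q ENNReal.ofReal_ne_top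
    filter_upwards [h1, h2] with ω hω1 hω2
    have hmul : ENNReal.ofReal l * Z ω ≤ 1 := by
      have := hω2 ▸ hω1
      simpa [Pi.smul_apply, smul_eq_mul] using this
    have hZle : Z ω ≤ (ENNReal.ofReal l)⁻¹ := by
      calc Z ω = (ENNReal.ofReal l)⁻¹ * (ENNReal.ofReal l * Z ω) := by
            rw [← mul_assoc, ENNReal.inv_mul_cancel hl0 ENNReal.ofReal_ne_top, one_mul]
        _ ≤ (ENNReal.ofReal l)⁻¹ * 1 := mul_le_mul_right hmul _
        _ = (ENNReal.ofReal l)⁻¹ := mul_one _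
    have hfin : (ENNReal.ofReal l)⁻¹ ≠ ⊤ := by
      simp [ENNReal.inv_ne_top, hl0]
    calc (Z ω).toReal ≤ ((ENNReal.ofReal l)⁻¹).toReal :=
          ENNReal.toReal_mono hfin hZle
      _ = 1 / l := by
          rw [ENNReal.toReal_inv, ENNReal.toReal_ofReal hl.le, one_div]
  -- the clamped density
  set f : Ω → ℝ := fun ω => min (Z ω).toReal (1 / l) with hf
  have hfeq : f =ᵐ[Q] fun ω => (Z ω).toReal := by
    filter_upwards [hZbd] with ω hω
    simp only [hf]
    exact min_eq_left hω
  have hl1pos : (0 : ℝ) < 1 / l := by positivity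
  have hfbd : ∀ ω, ‖f ω‖ ≤ 1 / l := by
    intro ω
    rw [Real.norm_eq_abs, abs_le]
    constructor
    · have : (0:ℝ) ≤ f ω := le_min ENNReal.toReal_nonneg hl1pos.le
      linarith
    · exact min_le_right _ _
  have hfmeas : Measurable f :=
    (Measure.measurable_rnDeriv Q₁ Q).ennreal_toReal.min measurable_const
  have hfint : Integrable f Q :=
    ⟨hfmeas.aestronglyMeasurable, HasFiniteIntegral.of_bounded
      (C := 1 / l) (Filter.Eventually.of_forall hfbd)⟩
  have hfL2 : MemLp f 2 Q :=
    MemLp.of_bound hfmeas.aestronglyMeasurable (1 / l)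
      (Filter.Eventually.of_forall hfbd)
  -- change-of-measure formulas
  have hint1 : ∫ ω, f ω ∂Q = 1 := by
    rw [integral_congr_ae hfeq]
    have := MeasureTheory.integral_rnDeriv_smul hac (f := fun _ : Ω => (1 : ℝ))
    simpa [smul_eq_mul] using this
  have hintψ : ∀ i, ∫ ω, f ω * ψ i ω ∂Q = 0 := by
    intro i
    have hcongr : (fun ω => f ω * ψ i ω) =ᵐ[Q] fun ω => (Z ω).toReal * ψ i ω := by
      filter_upwards [hfeq] with ω hω; rw [hω]
    rw [integral_congr_ae hcongr]
    have := MeasureTheory.integral_rnDeriv_smul hac (f := fun ω => ψ i ω)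
    simp only [smul_eq_mul] at this
    exact this.trans (hψQ1 i).2
  -- completeness applied to f
  obtain ⟨a₀, a, haff⟩ := hcomplete f hfL2
  -- g = f - 1
  set g : Ω → ℝ := fun ω => f ω - 1 with hg
  have hgbd : ∀ ω, ‖g ω‖ ≤ 1 / l + 1 := by
    intro ω
    calc ‖g ω‖ ≤ ‖f ω‖ + ‖(1:ℝ)‖ := norm_sub_le _ _
      _ ≤ 1 / l + 1 := by have := hfbd ω; simp at this ⊢; linarith
  have hgmeas : Measurable g := hfmeas.sub measurable_const
  have hgint : Integrable g Q := hfint.sub (integrable_const 1)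
  have hgint0 : ∫ ω, g ω ∂Q = 0 := by
    rw [hg]
    rw [integral_sub hfint (integrable_const 1)]
    simp [hint1]
  have hψint : ∀ i, Integrable (ψ i) Q := fun i =>
    (hψQ i).1.integrable (by norm_num)
  have hgψint : ∀ i, Integrable (fun ω => g ω * ψ i ω) Q := fun i =>
    (hψint i).bdd_mul hgmeas.aestronglyMeasurable (Filter.Eventually.of_forall hgbd)
  have hgψ0 : ∀ i, ∫ ω, g ω * ψ i ω ∂Q = 0 := by
    intro i
    have : (fun ω => g ω * ψ i ω) = fun ω => f ω * ψ i ω - ψ i ω := by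
      funext ω; simp [hg]; ring
    rw [this, integral_sub ((hψint i).bdd_mul hfmeas.aestronglyMeasurable
      (Filter.Eventually.of_forall hfbd)) (hψint i), hintψ i, (hψQ i).2, sub_zero]
  -- g =ᵐ (a₀ - 1) + ∑ aᵢ ψᵢ
  have hgaff : g =ᵐ[Q] fun ω => (a₀ - 1) + ∑ i, a i * ψ i ω := by
    filter_upwards [haff] with ω hω
    simp only [hg, hω]; ring
  -- ∫ g² = 0
  have hgg : ∫ ω, g ω * g ω ∂Q = 0 := by
    have hcongr : (fun ω => g ω * g ω) =ᵐ[Q]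
        fun ω => (a₀ - 1) * g ω + ∑ i, a i * (g ω * ψ i ω) := by
      filter_upwards [hgaff] with ω hω
      rw [mul_comm (g ω) (g ω)]
      nth_rewrite 1 [hω]
      rw [add_mul, Finset.sum_mul]
      congr 1
      exact Finset.sum_congr rfl fun i _ => by ring
    rw [integral_congr_ae hcongr]
    rw [integral_add ((hgint.const_mul _))
      (integrable_finset_sum _ fun i _ => (hgψint i).const_mul _)]
    rw [integral_const_mul, hgint0, integral_finset_sum _
      (fun i _ => (hgψint i).const_mul _)]
    simp [integral_const_mul, hgψ0]
  -- hence g = 0 a.e.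
  have hggint : Integrable (fun ω => g ω * g ω) Q :=
    hgint.bdd_mul hgmeas.aestronglyMeasurable (Filter.Eventually.of_forall hgbd)
  have hgg0 : (fun ω => g ω * g ω) =ᵐ[Q] 0 :=
    (integral_eq_zero_iff_of_nonneg
      (fun ω => mul_self_nonneg (g ω)) hggint).mp hgg
  have hfone : f =ᵐ[Q] fun _ => 1 := by
    filter_upwards [hgg0] with ω hω
    have : g ω = 0 := by
      have := hω
      simpa [mul_self_eq_zero] using this
    simpa [hg, sub_eq_zero] using this
  -- Z = 1 a.e.
  have hZone : Z =ᵐ[Q] 1 := by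
    filter_upwards [hfone.symm.trans hfeq] with ω hω
    have : (Z ω).toReal = 1 := hω.symm
    exact (ENNReal.toReal_eq_one_iff _).mp this
  calc Q₁ = Q.withDensity Z := (Measure.withDensity_rnDeriv_eq Q₁ Q hac).symm
    _ = Q.withDensity 1 := withDensity_congr_ae hZone
    _ = Q := withDensity_one

/-- Semi-static completeness implies extremality (semi-static Jacod–Yor theorem, static
case): if every `X ∈ L²(F, Q)` can be written `Q`-a.s. as an affine combination
`a₀ + a₁ ψ₁ + ⋯ + a_n ψ_n` of the statically traded payoffs and cash, then `Q` is an
extreme point of the set of calibrated measures. -/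
theorem extreme_of_static_completeness
    {Ω : Type*} [MeasurableSpace Ω] (P : Set (Measure Ω)) {n : ℕ}
    (ψ : Fin n → Ω → ℝ) (Q : Measure Ω)
    (hQ : IsCalibrated P ψ Q)
    (hcomplete : ∀ X : Ω → ℝ, MemLp X 2 Q →
      ∃ (a₀ : ℝ) (a : Fin n → ℝ),
        X =ᵐ[Q] fun ω => a₀ + ∑ i, a i * ψ i ω) :
    ∀ (Q₁ Q₂ : Measure Ω) (l : ℝ), IsCalibrated P ψ Q₁ → IsCalibrated P ψ Q₂ →
      0 < l → l < 1 →
      Q = ENNReal.ofReal l • Q₁ + ENNReal.ofReal (1 - l) • Q₂ →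
      Q₁ = Q ∧ Q₂ = Q := by
  intro Q₁ Q₂ l hQ₁ hQ₂ hl hl1 hdecomp
  obtain ⟨hQp, -, hψQ⟩ := hQ
  obtain ⟨hQ1p, -, hψQ1⟩ := hQ₁
  obtain ⟨hQ2p, -, hψQ2⟩ := hQ₂
  constructor
  · exact key_static_complete ψ Q Q₁ (ENNReal.ofReal (1 - l) • Q₂)
      hQp hQ1p hψQ hψQ1 hcomplete hl hdecomp
  · exact key_static_complete ψ Q Q₂ (ENNReal.ofReal l • Q₁)
      hQp hQ2p hψQ hψQ2 hcomplete (by linarith) (hdecomp.trans (add_comm _ _))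
end

section
/- Let ℚ be a probability measure on (Ω,F), let W ⊆ L²(F,ℚ) contain the constants, and suppose W = L²(F,ℚ). If ℚ = λℚ¹ + (1-λ)ℚ² where 0 < λ < 1, ℚ¹,ℚ² are probability measures absolutely continuous with respect to ℚ with bounded densities, and E_{ℚ¹}[Y] = E_ℚ[Y] for all Y ∈ W with E_ℚ[Y²] < ∞, then ℚ¹ = ℚ² = ℚ. -/
open MeasureTheory
open scoped ENNReal

/-- If the set `W` of semi-static outcomes (which contains the constants and consists of
square-integrable random variables) is all of `L²(F, Q)`, and `Q = l Q₁ + (1-l) Q₂` with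
`0 < l < 1` for probability measures `Q₁, Q₂ ≪ Q` with bounded densities, such that
`E_{Q₁}[Y] = E_Q[Y]` for all square-integrable `Y ∈ W`, then `Q₁ = Q₂ = Q`. -/
theorem completeness_forces_trivial_decomposition
    {Ω : Type*} [MeasurableSpace Ω] (Q : Measure Ω) [IsProbabilityMeasure Q]
    (W : Set (Ω → ℝ))
    (hW2 : ∀ f ∈ W, MemLp f 2 Q)
    (hWconst : ∀ c : ℝ, (fun _ => c) ∈ W)
    (hWfull : ∀ X : Ω → ℝ, MemLp X 2 Q → ∃ Y ∈ W, X =ᵐ[Q] Y)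
    (Q₁ Q₂ : Measure Ω) [IsProbabilityMeasure Q₁] [IsProbabilityMeasure Q₂]
    (l : ℝ) (hl0 : 0 < l) (hl1 : l < 1)
    (hconv : Q = ENNReal.ofReal l • Q₁ + ENNReal.ofReal (1 - l) • Q₂)
    (Z₁ Z₂ : Ω → ℝ≥0∞) (hZ₁ : Measurable Z₁) (hZ₂ : Measurable Z₂)
    (hd₁ : Q₁ = Q.withDensity Z₁) (hd₂ : Q₂ = Q.withDensity Z₂)
    (hb₁ : ∃ C : ℝ≥0∞, C ≠ ⊤ ∧ ∀ ω, Z₁ ω ≤ C)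
    (hb₂ : ∃ C : ℝ≥0∞, C ≠ ⊤ ∧ ∀ ω, Z₂ ω ≤ C)
    (hmatch : ∀ Y ∈ W, MemLp Y 2 Q → ∫ ω, Y ω ∂Q₁ = ∫ ω, Y ω ∂Q) :
    Q₁ = Q ∧ Q₂ = Q := by
  have hac : Q₁ ≪ Q := by rw [hd₁]; exact withDensity_absolutelyContinuous Q Z₁
  have h1 : Q₁ = Q := by
    ext A hA
    have hX : MemLp (A.indicator (fun _ => (1:ℝ))) 2 Q :=
      (memLp_indicator_const 2 hA 1 (Or.inr (measure_ne_top Q A)))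
    obtain ⟨Y, hYW, hXY⟩ := hWfull _ hX
    have hY2 := hW2 Y hYW
    have heq := hmatch Y hYW hY2
    have hI1 : ∫ ω, Y ω ∂Q₁ = ∫ ω, A.indicator (fun _ => (1:ℝ)) ω ∂Q₁ :=
      integral_congr_ae (hac.ae_eq hXY).symm
    have hI2 : ∫ ω, Y ω ∂Q = ∫ ω, A.indicator (fun _ => (1:ℝ)) ω ∂Q :=
      integral_congr_ae hXY.symm
    have : ∫ ω, A.indicator (fun _ => (1:ℝ)) ω ∂Q₁
        = ∫ ω, A.indicator (fun _ => (1:ℝ)) ω ∂Q := by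
      rw [← hI1, ← hI2, heq]
    rw [integral_indicator_const 1 hA, integral_indicator_const 1 hA] at this
    simp only [smul_eq_mul, mul_one] at this
    exact (ENNReal.toReal_eq_toReal_iff' (measure_ne_top Q₁ A) (measure_ne_top Q A)).mp this
  refine ⟨h1, ?_⟩
  ext A hA
  have hc : Q A = ENNReal.ofReal l * Q A + ENNReal.ofReal (1 - l) * Q₂ A := by
    conv_lhs => rw [hconv]
    rw [h1]
    simp [Measure.add_apply, Measure.smul_apply, smul_eq_mul]
  have hsplit : Q A = ENNReal.ofReal l * Q A + ENNReal.ofReal (1 - l) * Q A := by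
    rw [← add_mul, ← ENNReal.ofReal_add hl0.le (by linarith)]
    simp
  have hkey : ENNReal.ofReal (1 - l) * Q₂ A = ENNReal.ofReal (1 - l) * Q A := by
    have h := hsplit.symm.trans hc
    exact ((ENNReal.add_right_inj
      (ENNReal.mul_ne_top ENNReal.ofReal_ne_top (measure_ne_top Q A))).mp h).symm
  exact ((ENNReal.mul_right_inj (by simp only [ne_eq, ENNReal.ofReal_eq_zero, not_le]; linarith) ENNReal.ofReal_ne_top).mp hkey)
end

section
/- Let S be a continuous martingale under ℚ with S_0 = 0, and let τ = sup{t ∈ [0,T] : S_t = 1} with τ = 0 if the set is empty. Suppose S remains a martingale in the progressive enlargement 𝔾 of its natural filtration with the process 1_{[τ,T]}. Then ℚ(S_t < 1 for all t ∈ [0,T]) = 1 and τ = 0 almost surely. -/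
open MeasureTheory

open Filter Topology

variable {Ω : Type*} {m0 : MeasurableSpace Ω}

/-- The filtration generated by the single-jump process `1_{[τ,T]}`. -/
noncomputable def jumpFiltration' (τ : Ω → ℝ) (u : ℝ) : MeasurableSpace Ω :=
  ⨆ s ∈ Set.Iic u, MeasurableSpace.comap
    (fun ω => if τ ω ≤ s then (1 : ℝ) else 0) inferInstance

/-- Let `S` be a continuous martingale with `S₀ = 0`, `𝔽` its natural (right-continuous)
filtration, and `τ = sup{t ∈ [0,T] : S_t = 1}` (with `τ = 0` if this set is empty, which
is the Lean convention `sSup ∅ = 0`).  If `S` remains a martingale in the progressive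
enlargement `𝔾` of `𝔽` with the single-jump process `1_{[τ,T]}`, then a.s. `S_t < 1` for
all `t ∈ [0,T]` and `τ = 0` a.s. -/
theorem last_hitting_time_enlargement_forces_below_one
    (μ : Measure Ω) [IsProbabilityMeasure μ]
    (T : ℝ) (hT : 0 < T)
    (S : ℝ → Ω → ℝ)
    (hScont : ∀ ω, Continuous fun t => S t ω)
    (hS0 : ∀ ω, S 0 ω = 0)
    (ℱ : Filtration ℝ m0)
    (hℱ : ∀ t, (ℱ t : MeasurableSpace Ω) =
      ⨅ u ∈ Set.Ioi t, ⨆ s ∈ Set.Iic u, MeasurableSpace.comap (S s) inferInstance)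
    (hSmartF : Martingale S ℱ μ)
    (𝔾 : Filtration ℝ m0)
    (h𝔾 : ∀ t, (𝔾 t : MeasurableSpace Ω) =
      ⨅ u ∈ Set.Ioi t, ((ℱ u : MeasurableSpace Ω) ⊔
        jumpFiltration' (fun ω => sSup {t | t ∈ Set.Icc 0 T ∧ S t ω = 1}) u))
    (hSmartG : Martingale S 𝔾 μ) :
    (∀ᵐ ω ∂μ, ∀ t ∈ Set.Icc (0 : ℝ) T, S t ω < 1) ∧
    (∀ᵐ ω ∂μ, sSup {t | t ∈ Set.Icc 0 T ∧ S t ω = 1} = 0) := by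
  classical
  set τ : Ω → ℝ := fun ω => sSup {t | t ∈ Set.Icc 0 T ∧ S t ω = 1} with hτ
  -- basic facts about τ
  have hKcompact : ∀ ω, IsCompact {t | t ∈ Set.Icc 0 T ∧ S t ω = 1} := by
    intro ω
    have h : {t | t ∈ Set.Icc 0 T ∧ S t ω = 1}
        = Set.Icc 0 T ∩ (fun t => S t ω) ⁻¹' {1} := by
      ext t
      simp only [Set.mem_setOf_eq, Set.mem_inter_iff, Set.mem_preimage,
        Set.mem_singleton_iff]
    rw [h]
    exact isCompact_Icc.inter_right (isClosed_singleton.preimage (hScont ω))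
  have hτmem : ∀ ω, {t | t ∈ Set.Icc 0 T ∧ S t ω = 1}.Nonempty →
      τ ω ∈ {t | t ∈ Set.Icc 0 T ∧ S t ω = 1} := fun ω h =>
    (hKcompact ω).sSup_mem h
  have hτnonneg : ∀ ω, 0 ≤ τ ω := by
    intro ω
    rcases Set.eq_empty_or_nonempty {t | t ∈ Set.Icc 0 T ∧ S t ω = 1} with h | h
    · simp only [hτ, h, Real.sSup_empty]; exact le_refl 0
    · exact (hτmem ω h).1.1
  have hτleT : ∀ ω, τ ω ≤ T := by
    intro ω
    rcases Set.eq_empty_or_nonempty {t | t ∈ Set.Icc 0 T ∧ S t ω = 1} with h | h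
    · simp only [hτ, h, Real.sSup_empty]; exact hT.le
    · exact (hτmem ω h).1.2
  have hSτ : ∀ ω, 0 < τ ω → S (τ ω) ω = 1 := by
    intro ω hpos
    rcases Set.eq_empty_or_nonempty {t | t ∈ Set.Icc 0 T ∧ S t ω = 1} with h | h
    · exfalso
      have : τ ω = 0 := by simp only [hτ, h, Real.sSup_empty]
      rw [this] at hpos; exact lt_irrefl _ hpos
    · exact (hτmem ω h).2
  have hempty : ∀ ω, τ ω = 0 → {t | t ∈ Set.Icc 0 T ∧ S t ω = 1} = ∅ := by
    intro ω h0
    by_contra hne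
    have hmem := hτmem ω (Set.nonempty_iff_ne_empty.mpr hne)
    rw [h0] at hmem
    have := hmem.2
    rw [hS0] at this
    norm_num at this
  -- measurability of {τ ≤ t} w.r.t. 𝔾 t
  have hτle_meas : ∀ t : ℝ, MeasurableSet[𝔾 t] {ω | τ ω ≤ t} := by
    intro t
    rw [h𝔾 t]
    refine MeasurableSpace.measurableSet_iInf.mpr fun u => ?_
    refine MeasurableSpace.measurableSet_iInf.mpr fun hu => ?_
    have hmem : t ∈ Set.Iic u := Set.mem_Iic.mpr (Set.mem_Ioi.mp hu).le
    have hsub1 : MeasurableSpace.comap (fun ω => if τ ω ≤ t then (1:ℝ) else 0)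
          inferInstance ≤ jumpFiltration' τ u := by
      rw [jumpFiltration']
      exact le_biSup
        (fun s => MeasurableSpace.comap (fun ω => if τ ω ≤ s then (1:ℝ) else 0)
          inferInstance) hmem
    have hsub : MeasurableSpace.comap (fun ω => if τ ω ≤ t then (1:ℝ) else 0) inferInstance
        ≤ (ℱ u : MeasurableSpace Ω) ⊔ jumpFiltration' τ u :=
      le_trans hsub1 le_sup_right
    refine hsub _ ⟨{1}, measurableSet_singleton 1, ?_⟩
    ext ω; by_cases h : τ ω ≤ t <;> simp [h]
  have hA_meas : MeasurableSet[𝔾 0] {ω | 0 < τ ω} := by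
    have h : {ω | 0 < τ ω} = {ω | τ ω ≤ 0}ᶜ := by
      ext ω; simp [not_le]
    rw [h]; exact (hτle_meas 0).compl
  have hAm0 : MeasurableSet {ω | 0 < τ ω} := 𝔾.le 0 _ hA_meas
  -- key arithmetic equivalence
  have hkey : ∀ (r : ℝ) (n j : ℕ), 1 ≤ n → (r * n / T ≤ j ↔ r ≤ (j:ℝ) * T / n) := by
    intro r n j hn
    have hn' : (0:ℝ) < n := by exact_mod_cast Nat.pos_of_ne_zero (by omega)
    rw [div_le_iff₀ hT, le_div_iff₀ hn']
  have hkey' : ∀ (r : ℝ) (n j : ℕ), 1 ≤ n → ((j:ℝ) < r * n / T ↔ (j:ℝ) * T / n < r) := by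
    intro r n j hn
    have hn' : (0:ℝ) < n := by exact_mod_cast Nat.pos_of_ne_zero (by omega)
    rw [lt_div_iff₀ hT, div_lt_iff₀ hn']
  -- the grid events
  set B : ℕ → ℕ → Set Ω := fun n i =>
    {ω | ⌈τ ω * n / T⌉₊ = i} ∩ {ω | S ((i : ℝ) * T / n) ω ∈ Set.Icc (0:ℝ) 2} with hB
  have hceil_eq : ∀ (n i : ℕ), 1 ≤ n → 1 ≤ i →
      {ω | ⌈τ ω * n / T⌉₊ = i} =
        {ω | τ ω ≤ (i:ℝ) * T / n} ∩ ({ω | τ ω ≤ ((i - 1 : ℕ) : ℝ) * T / n})ᶜ := by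
    intro n i hn hi
    ext ω
    simp only [Set.mem_setOf_eq, Set.mem_inter_iff, Set.mem_compl_iff, not_le]
    rw [Nat.ceil_eq_iff (by omega : i ≠ 0)]
    constructor
    · rintro ⟨h1, h2⟩
      exact ⟨(hkey _ n i hn).mp h2, (hkey' _ n (i-1) hn).mp h1⟩
    · rintro ⟨h1, h2⟩
      exact ⟨(hkey' _ n (i-1) hn).mpr h2, (hkey _ n i hn).mpr h1⟩
  have hBmeas : ∀ n i : ℕ, 1 ≤ n → 1 ≤ i → MeasurableSet[𝔾 ((i:ℝ) * T / n)] (B n i) := by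
    intro n i hn hi
    have hn' : (0:ℝ) < n := by exact_mod_cast Nat.pos_of_ne_zero (by omega)
    refine MeasurableSet.inter ?_ ?_
    · rw [hceil_eq n i hn hi]
      refine (hτle_meas _).inter (MeasurableSet.compl ?_)
      have hle : ((i - 1 : ℕ) : ℝ) * T / n ≤ (i:ℝ) * T / n := by
        have : ((i - 1 : ℕ) : ℝ) ≤ (i : ℝ) := by exact_mod_cast Nat.sub_le i 1
        have h2 : ((i - 1 : ℕ) : ℝ) * T ≤ (i:ℝ) * T := by nlinarith
        exact div_le_div_of_nonneg_right h2 hn'.le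
      exact 𝔾.mono hle _ (hτle_meas _)
    · exact (hSmartG.stronglyAdapted _).measurable measurableSet_Icc
  have hBm0 : ∀ n i : ℕ, 1 ≤ n → 1 ≤ i → MeasurableSet (B n i) :=
    fun n i hn hi => 𝔾.le _ _ (hBmeas n i hn hi)
  -- martingale identity on each piece
  have hgridleT : ∀ n i : ℕ, 1 ≤ n → i ≤ n → (i:ℝ) * T / n ≤ T := by
    intro n i hn hin
    have hn' : (0:ℝ) < n := by exact_mod_cast Nat.pos_of_ne_zero (by omega)
    rw [div_le_iff₀ hn']
    have : (i:ℝ) ≤ (n:ℝ) := by exact_mod_cast hin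
    nlinarith
  have hpiece : ∀ n i : ℕ, 1 ≤ n → 1 ≤ i → i ≤ n →
      ∫ ω in B n i, S ((i:ℝ) * T / n) ω ∂μ = ∫ ω in B n i, S T ω ∂μ :=
    fun n i hn hi hin =>
      hSmartG.setIntegral_eq (hgridleT n i hn hin) (hBmeas n i hn hi)
  -- the union and the summed function
  set D : ℕ → Set Ω := fun n => ⋃ i ∈ Finset.Icc 1 n, B n i with hD
  set G : ℕ → Ω → ℝ :=
    fun n ω => ∑ i ∈ Finset.Icc 1 n, (B n i).indicator (S ((i:ℝ) * T / n)) ω with hG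
  have hDmeas : ∀ n, MeasurableSet (D n) := by
    intro n
    rw [hD]
    refine Finset.measurableSet_biUnion _ fun i hi => ?_
    obtain ⟨h1, h2⟩ := Finset.mem_Icc.mp hi
    exact hBm0 n i (le_trans h1 h2) h1
  have hdisj : ∀ n, Set.Pairwise ↑(Finset.Icc 1 n) (Function.onFun Disjoint (B n)) := by
    intro n i _ j _ hij
    refine Set.disjoint_left.mpr fun ω h1 h2 => hij ?_
    exact h1.1.symm.trans h2.1
  have hsum : ∀ n, 1 ≤ n → ∫ ω, G n ω ∂μ = ∫ ω in D n, S T ω ∂μ := by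
    intro n hn
    have h1 : ∫ ω, G n ω ∂μ
        = ∑ i ∈ Finset.Icc 1 n, ∫ ω, (B n i).indicator (S ((i:ℝ) * T / n)) ω ∂μ := by
      rw [hG]
      refine integral_finset_sum _ fun i hi => ?_
      obtain ⟨hi1, hi2⟩ := Finset.mem_Icc.mp hi
      exact (hSmartG.integrable _).indicator (hBm0 n i hn hi1)
    rw [h1, hD]
    rw [integral_biUnion_finset (Finset.Icc 1 n)
      (fun i hi => hBm0 n i hn (Finset.mem_Icc.mp hi).1) (hdisj n)
      (fun i hi => (hSmartG.integrable T).integrableOn)]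
    refine Finset.sum_congr rfl fun i hi => ?_
    obtain ⟨hi1, hi2⟩ := Finset.mem_Icc.mp hi
    rw [integral_indicator (hBm0 n i hn hi1)]
    exact hpiece n i hn hi1 hi2
  -- the grid point just above τ
  have hceil_mem : ∀ (n : ℕ) ω, 1 ≤ n → 0 < τ ω → ⌈τ ω * n / T⌉₊ ∈ Finset.Icc 1 n := by
    intro n ω hn hτω
    have hn' : (0:ℝ) < n := by exact_mod_cast Nat.pos_of_ne_zero (by omega)
    refine Finset.mem_Icc.mpr ⟨?_, ?_⟩
    · exact Nat.ceil_pos.mpr (div_pos (mul_pos hτω hn') hT)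
    · refine Nat.ceil_le.mpr ((hkey (τ ω) n n hn).mpr ?_)
      rw [mul_div_cancel_left₀ T hn'.ne']
      exact hτleT ω
  have hgrid_tendsto : ∀ ω, 0 < τ ω →
      Tendsto (fun n : ℕ => (⌈τ ω * n / T⌉₊ : ℝ) * T / n) atTop (𝓝 (τ ω)) := by
    intro ω hτω
    have hlow : ∀ n : ℕ, 1 ≤ n → τ ω ≤ (⌈τ ω * n / T⌉₊ : ℝ) * T / n := by
      intro n hn
      have hn' : (0:ℝ) < n := by exact_mod_cast Nat.pos_of_ne_zero (by omega)
      rw [le_div_iff₀ hn', ← div_le_iff₀ hT]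
      exact Nat.le_ceil _
    have hhigh : ∀ n : ℕ, 1 ≤ n → (⌈τ ω * n / T⌉₊ : ℝ) * T / n ≤ τ ω + T / n := by
      intro n hn
      have hn' : (0:ℝ) < n := by exact_mod_cast Nat.pos_of_ne_zero (by omega)
      have hx : (0:ℝ) ≤ τ ω * n / T := div_nonneg (mul_nonneg (hτnonneg ω) hn'.le) hT.le
      have hc : (⌈τ ω * n / T⌉₊ : ℝ) ≤ τ ω * n / T + 1 := (Nat.ceil_lt_add_one hx).le
      have h2 : (⌈τ ω * n / T⌉₊ : ℝ) * T / n ≤ (τ ω * n / T + 1) * T / n := by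
        have := mul_le_mul_of_nonneg_right hc hT.le
        exact div_le_div_of_nonneg_right this hn'.le
      refine h2.trans (le_of_eq ?_)
      field_simp
    have hupper : Tendsto (fun n : ℕ => τ ω + T / n) atTop (𝓝 (τ ω)) := by
      have := tendsto_const_div_atTop_nhds_zero_nat T
      have h2 := Tendsto.add (tendsto_const_nhds (x := τ ω) (f := atTop)) this
      simpa using h2
    refine tendsto_of_tendsto_of_tendsto_of_le_of_le' tendsto_const_nhds hupper ?_ ?_
    · exact eventually_atTop.mpr ⟨1, hlow⟩
    · exact eventually_atTop.mpr ⟨1, hhigh⟩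
  have hu_tendsto : ∀ ω, 0 < τ ω →
      Tendsto (fun n : ℕ => S ((⌈τ ω * n / T⌉₊ : ℝ) * T / n) ω) atTop (𝓝 1) := by
    intro ω hτω
    have h := ((hScont ω).tendsto (τ ω)).comp (hgrid_tendsto ω hτω)
    rwa [hSτ ω hτω] at h
  -- evaluating G
  have hGeq : ∀ (n : ℕ) ω, 1 ≤ n → 0 < τ ω →
      S ((⌈τ ω * n / T⌉₊ : ℝ) * T / n) ω ∈ Set.Icc (0:ℝ) 2 →
      G n ω = S ((⌈τ ω * n / T⌉₊ : ℝ) * T / n) ω := by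
    intro n ω hn hτω hS2
    simp only [hG]
    rw [Finset.sum_eq_single_of_mem ⌈τ ω * n / T⌉₊ (hceil_mem n ω hn hτω)
      (fun j _ hj => Set.indicator_of_notMem
        (fun (hm : ω ∈ B n j) => hj hm.1.symm) _)]
    refine Set.indicator_of_mem ?_ _
    simp only [hB, Set.mem_inter_iff, Set.mem_setOf_eq]
    exact ⟨trivial, hS2⟩
  have hGcases : ∀ (n : ℕ) ω, G n ω = 0 ∨ G n ω ∈ Set.Icc (0:ℝ) 2 := by
    intro n ω
    by_cases h : ∃ i ∈ Finset.Icc 1 n, ω ∈ B n i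
    · obtain ⟨i, hi, hωB⟩ := h
      right
      have hval : G n ω = S ((i:ℝ) * T / n) ω := by
        simp only [hG]
        rw [Finset.sum_eq_single_of_mem i hi
          (fun j _ hj => Set.indicator_of_notMem
            (fun (hm : ω ∈ B n j) => hj (hm.1.symm.trans hωB.1)) _)]
        exact Set.indicator_of_mem hωB _
      rw [hval]; exact hωB.2
    · left
      simp only [hG]
      exact Finset.sum_eq_zero fun i hi =>
        Set.indicator_of_notMem (fun (hm : ω ∈ B n i) => h ⟨i, hi, hm⟩) _
  -- membership in D
  have hmemD : ∀ (n : ℕ) ω, 1 ≤ n → 0 < τ ω →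
      (S ((⌈τ ω * n / T⌉₊ : ℝ) * T / n) ω ∈ Set.Icc (0:ℝ) 2 → ω ∈ D n) := by
    intro n ω hn hτω hS2
    rw [hD]
    exact Set.mem_biUnion (hceil_mem n ω hn hτω) ⟨rfl, hS2⟩
  have hnotD : ∀ (n : ℕ) ω, τ ω = 0 → ω ∉ D n := by
    intro n ω h0 hmem
    rw [hD] at hmem
    obtain ⟨i, hi, hωB⟩ := Set.mem_iUnion₂.mp hmem
    have h1 : ⌈τ ω * n / T⌉₊ = i := hωB.1
    rw [h0] at h1
    simp at h1
    obtain ⟨hi1, -⟩ := Finset.mem_Icc.mp hi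
    omega
  -- DCT for the left-hand side
  have hGmeas : ∀ n, AEStronglyMeasurable (G n) μ := by
    intro n
    rw [hG]
    refine (Finset.aemeasurable_fun_sum _ fun i hi => ?_).aestronglyMeasurable
    obtain ⟨hi1, hi2⟩ := Finset.mem_Icc.mp hi
    exact (((hSmartG.stronglyAdapted _).mono (𝔾.le _)).measurable.indicator
      (hBm0 n i (hi1.trans hi2) hi1)).aemeasurable
  have hLHS : Tendsto (fun n => ∫ ω, G n ω ∂μ) atTop
      (𝓝 (∫ ω, Set.indicator {ω | 0 < τ ω} (fun _ => (1:ℝ)) ω ∂μ)) := by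
    refine tendsto_integral_of_dominated_convergence (fun _ => 2) hGmeas
      (integrable_const 2) (fun n => Eventually.of_forall fun ω => ?_) ?_
    · show ‖G n ω‖ ≤ (2:ℝ)
      rcases hGcases n ω with h | h
      · rw [h]; norm_num
      · rw [Real.norm_eq_abs, abs_le]
        exact ⟨by linarith [h.1], h.2⟩
    · refine Eventually.of_forall fun ω => ?_
      by_cases hτω : 0 < τ ω
      · have hind : Set.indicator {ω | 0 < τ ω} (fun _ => (1:ℝ)) ω = 1 :=
          Set.indicator_of_mem (show ω ∈ {ω | 0 < τ ω} from hτω) _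
        rw [hind]
        have hev : ∀ᶠ n : ℕ in atTop, S ((⌈τ ω * n / T⌉₊ : ℝ) * T / n) ω ∈ Set.Ioo (0:ℝ) 2 :=
          hu_tendsto ω hτω (Ioo_mem_nhds one_pos one_lt_two)
        have hev1 : ∀ᶠ n : ℕ in atTop, 1 ≤ n := eventually_ge_atTop 1
        have heq : (fun n : ℕ => S ((⌈τ ω * n / T⌉₊ : ℝ) * T / n) ω)
            =ᶠ[atTop] fun n => G n ω := by
          filter_upwards [hev, hev1] with n h1 h2
          exact (hGeq n ω h2 hτω (Set.mem_Icc_of_Ioo h1)).symm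
        exact Tendsto.congr' heq (hu_tendsto ω hτω)
      · have h0 : τ ω = 0 := le_antisymm (not_lt.mp hτω) (hτnonneg ω)
        have hind : Set.indicator {ω | 0 < τ ω} (fun _ => (1:ℝ)) ω = 0 :=
          Set.indicator_of_notMem (show ω ∉ {ω | 0 < τ ω} from hτω) _
        rw [hind]
        refine tendsto_const_nhds.congr fun n => ?_
        simp only [hG]
        exact (Finset.sum_eq_zero fun i hi => Set.indicator_of_notMem
          (fun (hm : ω ∈ B n i) => hnotD n ω h0 (by
            rw [hD]; exact Set.mem_biUnion hi hm)) _).symm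
  -- DCT for the right-hand side
  have hSTmeas : AEStronglyMeasurable (S T) μ :=
    (hSmartG.integrable T).aestronglyMeasurable
  have hRHS : Tendsto (fun n => ∫ ω, Set.indicator (D n) (S T) ω ∂μ) atTop
      (𝓝 (∫ ω, Set.indicator {ω | 0 < τ ω} (S T) ω ∂μ)) := by
    refine tendsto_integral_of_dominated_convergence (fun ω => |S T ω|)
      (fun n => (((hSmartG.stronglyAdapted T).mono (𝔾.le T)).measurable.indicator
        (hDmeas n)).aestronglyMeasurable)
      (hSmartG.integrable T).abs
      (fun n => Eventually.of_forall fun ω => ?_)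
      (Eventually.of_forall fun ω => ?_)
    · exact (norm_indicator_le_norm_self _ _).trans_eq (Real.norm_eq_abs _)
    · by_cases hτω : 0 < τ ω
      · have hind : Set.indicator {ω | 0 < τ ω} (S T) ω = S T ω :=
          Set.indicator_of_mem (show ω ∈ {ω | 0 < τ ω} from hτω) _
        rw [hind]
        have hev : ∀ᶠ n : ℕ in atTop, S ((⌈τ ω * n / T⌉₊ : ℝ) * T / n) ω ∈ Set.Ioo (0:ℝ) 2 :=
          hu_tendsto ω hτω (Ioo_mem_nhds one_pos one_lt_two)
        have hev1 : ∀ᶠ n : ℕ in atTop, 1 ≤ n := eventually_ge_atTop 1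
        have heq : (fun _ : ℕ => S T ω) =ᶠ[atTop]
            fun n => Set.indicator (D n) (S T) ω := by
          filter_upwards [hev, hev1] with n h1 h2
          exact (Set.indicator_of_mem
            (hmemD n ω h2 hτω (Set.mem_Icc_of_Ioo h1)) _).symm
        exact Tendsto.congr' heq tendsto_const_nhds
      · have h0 : τ ω = 0 := le_antisymm (not_lt.mp hτω) (hτnonneg ω)
        have hind : Set.indicator {ω | 0 < τ ω} (S T) ω = 0 :=
          Set.indicator_of_notMem (show ω ∉ {ω | 0 < τ ω} from hτω) _
        rw [hind]
        refine tendsto_const_nhds.congr fun n => ?_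
        exact (Set.indicator_of_notMem (hnotD n ω h0) _).symm
  -- the value of the left limit
  have hval : ∫ ω, Set.indicator {ω | 0 < τ ω} (fun _ => (1:ℝ)) ω ∂μ
      = (μ {ω | 0 < τ ω}).toReal := by
    rw [integral_indicator hAm0]
    simp [setIntegral_const]
    rfl
  -- the value of the right limit
  have hzero : ∫ ω, Set.indicator {ω | 0 < τ ω} (S T) ω ∂μ = 0 := by
    rw [integral_indicator hAm0]
    rw [← hSmartG.setIntegral_eq hT.le hA_meas]
    simp [hS0]
  -- the two sequences agree eventually
  have hEq : (fun n => ∫ ω, G n ω ∂μ)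
      =ᶠ[atTop] fun n => ∫ ω, Set.indicator (D n) (S T) ω ∂μ := by
    filter_upwards [eventually_ge_atTop 1] with n hn
    rw [hsum n hn, integral_indicator (hDmeas n)]
  -- conclusion: μ {0 < τ} = 0
  have hA0 : μ {ω | 0 < τ ω} = 0 := by
    have h1 : Tendsto (fun n => ∫ ω, G n ω ∂μ) atTop (𝓝 ((μ {ω | 0 < τ ω}).toReal)) := by
      rw [← hval]; exact hLHS
    have h2 : Tendsto (fun n => ∫ ω, G n ω ∂μ) atTop (𝓝 0) := by
      rw [← hzero]; exact Tendsto.congr' hEq.symm hRHS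
    have h3 : (μ {ω | 0 < τ ω}).toReal = 0 := tendsto_nhds_unique h1 h2
    exact (ENNReal.toReal_eq_zero_iff _).mp h3 |>.resolve_right (measure_ne_top μ _)
  have haeτ : ∀ᵐ ω ∂μ, τ ω = 0 := by
    rw [ae_iff]
    have h : {ω | ¬ τ ω = 0} = {ω | 0 < τ ω} := by
      ext ω
      simp only [Set.mem_setOf_eq]
      constructor
      · intro h; exact lt_of_le_of_ne (hτnonneg ω) (Ne.symm h)
      · intro h; exact ne_of_gt h
    rw [h]; exact hA0
  constructor
  · filter_upwards [haeτ] with ω hω t ht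
    have hemp := hempty ω hω
    by_contra hge
    push_neg at hge
    have h1mem : (1:ℝ) ∈ Set.Icc (S 0 ω) (S t ω) := by
      rw [hS0]; exact ⟨zero_le_one, hge⟩
    obtain ⟨s, hs, hSs⟩ := intermediate_value_Icc ht.1
      ((hScont ω).continuousOn) h1mem
    have hmem : s ∈ {t | t ∈ Set.Icc 0 T ∧ S t ω = 1} :=
      ⟨⟨hs.1, hs.2.trans ht.2⟩, hSs⟩
    rw [hemp] at hmem
    exact hmem
  · filter_upwards [haeτ] with ω hω
    rw [hτ] at hω
    exact hω
end
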